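/- arXiv:0910.0452 — 13 statements merged into one kernel-verified Lean document; each statement's English description precedes it below -/
import Mathlib

section
/- Let m ∈ (0,1) and let K = ABCDE be a convex pentagon with first m-Kasner descendant K' (vertices dividing each side in ratio m:(1−m)). Then 1 − 2m(1−m) < Δ(K')/Δ(K) < 1 − m(1−m), where Δ denotes area. -/
open scoped BigOperators

/-- The wedge product of two plane vectors: half the cross product,
the signed area of the triangle spanned by them. -/
noncomputable def wedge (v u : ℝ × ℝ) : ℝ := (v.1 * u.2 - v.2 * u.1) / 2

/-- Signed (shoelace) area of a polygon given by its vertices. -/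
noncomputable def polyArea {n : ℕ} [NeZero n] (A : Fin n → ℝ × ℝ) : ℝ :=
  ∑ i : Fin n, wedge (A i) (A (i + 1))

/-- Signed area of a triangle. -/
noncomputable def triArea (X Y Z : ℝ × ℝ) : ℝ := wedge (Y - X) (Z - X)

/-- `A` lists the vertices of a convex polygon in counterclockwise order:
all other vertices lie strictly to the left of each directed edge. -/
def IsConvexCCW {n : ℕ} [NeZero n] (A : Fin n → ℝ × ℝ) : Prop :=
  ∀ i j : Fin n, j ≠ i → j ≠ i + 1 → 0 < wedge (A (i + 1) - A i) (A j - A i)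

/-- The first m-Kasner descendant: each vertex divides a side in ratio m:(1-m). -/
noncomputable def kasner {n : ℕ} [NeZero n] (m : ℝ) (A : Fin n → ℝ × ℝ) :
    Fin n → ℝ × ℝ :=
  fun i => A i + m • (A (i + 1) - A i)

set_option maxHeartbeats 1000000 in
lemma kasner_aux (m x0 y0 x1 y1 x2 y2 x3 y3 x4 y4 : ℝ) (hm0 : 0 < m) (hm1 : m < 1)
    (t012 : (0:ℝ) < ((x1 - x0) * (y2 - y0) - (y1 - y0) * (x2 - x0)))
    (t013 : (0:ℝ) < ((x1 - x0) * (y3 - y0) - (y1 - y0) * (x3 - x0)))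
    (t014 : (0:ℝ) < ((x1 - x0) * (y4 - y0) - (y1 - y0) * (x4 - x0)))
    (t023 : (0:ℝ) < ((x2 - x0) * (y3 - y0) - (y2 - y0) * (x3 - x0)))
    (t024 : (0:ℝ) < ((x2 - x0) * (y4 - y0) - (y2 - y0) * (x4 - x0)))
    (t034 : (0:ℝ) < ((x3 - x0) * (y4 - y0) - (y3 - y0) * (x4 - x0)))
    (t123 : (0:ℝ) < ((x2 - x1) * (y3 - y1) - (y2 - y1) * (x3 - x1)))
    (t124 : (0:ℝ) < ((x2 - x1) * (y4 - y1) - (y2 - y1) * (x4 - x1)))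
    (t134 : (0:ℝ) < ((x3 - x1) * (y4 - y1) - (y3 - y1) * (x4 - x1)))
    (t234 : (0:ℝ) < ((x3 - x2) * (y4 - y2) - (y3 - y2) * (x4 - x2)))
    : 1 - 2 * (m * (1 - m)) < ((((x1 - x0) * (y2 - y0) - (y1 - y0) * (x2 - x0)) + ((x2 - x0) * (y3 - y0) - (y2 - y0) * (x3 - x0)) + ((x3 - x0) * (y4 - y0) - (y3 - y0) * (x4 - x0))) / 2 - m * (1 - m) * ((((x1 - x0) * (y2 - y0) - (y1 - y0) * (x2 - x0)) + ((x2 - x1) * (y3 - y1) - (y2 - y1) * (x3 - x1)) + ((x3 - x2) * (y4 - y2) - (y3 - y2) * (x4 - x2)) + ((x3 - x0) * (y4 - y0) - (y3 - y0) * (x4 - x0)) + ((x1 - x0) * (y4 - y0) - (y1 - y0) * (x4 - x0))) / 2)) / ((((x1 - x0) * (y2 - y0) - (y1 - y0) * (x2 - x0)) + ((x2 - x0) * (y3 - y0) - (y2 - y0) * (x3 - x0)) + ((x3 - x0) * (y4 - y0) - (y3 - y0) * (x4 - x0))) / 2) ∧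
      ((((x1 - x0) * (y2 - y0) - (y1 - y0) * (x2 - x0)) + ((x2 - x0) * (y3 - y0) - (y2 - y0) * (x3 - x0)) + ((x3 - x0) * (y4 - y0) - (y3 - y0) * (x4 - x0))) / 2 - m * (1 - m) * ((((x1 - x0) * (y2 - y0) - (y1 - y0) * (x2 - x0)) + ((x2 - x1) * (y3 - y1) - (y2 - y1) * (x3 - x1)) + ((x3 - x2) * (y4 - y2) - (y3 - y2) * (x4 - x2)) + ((x3 - x0) * (y4 - y0) - (y3 - y0) * (x4 - x0)) + ((x1 - x0) * (y4 - y0) - (y1 - y0) * (x4 - x0))) / 2)) / ((((x1 - x0) * (y2 - y0) - (y1 - y0) * (x2 - x0)) + ((x2 - x0) * (y3 - y0) - (y2 - y0) * (x3 - x0)) + ((x3 - x0) * (y4 - y0) - (y3 - y0) * (x4 - x0))) / 2) < 1 - m * (1 - m) := by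
  have hc : 0 < m * (1 - m) := mul_pos hm0 (by linarith)
  have hDpos : (0:ℝ) < (((x1 - x0) * (y2 - y0) - (y1 - y0) * (x2 - x0)) + ((x2 - x0) * (y3 - y0) - (y2 - y0) * (x3 - x0)) + ((x3 - x0) * (y4 - y0) - (y3 - y0) * (x4 - x0))) := by linarith
  have key1 : ((((x1 - x0) * (y2 - y0) - (y1 - y0) * (x2 - x0)) + ((x2 - x1) * (y3 - y1) - (y2 - y1) * (x3 - x1)) + ((x3 - x2) * (y4 - y2) - (y3 - y2) * (x4 - x2)) + ((x3 - x0) * (y4 - y0) - (y3 - y0) * (x4 - x0)) + ((x1 - x0) * (y4 - y0) - (y1 - y0) * (x4 - x0))) - (((x1 - x0) * (y2 - y0) - (y1 - y0) * (x2 - x0)) + ((x2 - x0) * (y3 - y0) - (y2 - y0) * (x3 - x0)) + ((x3 - x0) * (y4 - y0) - (y3 - y0) * (x4 - x0)))) * (((x1 - x0) * (y2 - y0) - (y1 - y0) * (x2 - x0)) + ((x2 - x0) * (y3 - y0) - (y2 - y0) * (x3 - x0)) + ((x3 - x0) * (y4 - y0) - (y3 - y0) * (x4 - x0))) = ((x1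 - x0) * (y2 - y0) - (y1 - y0) * (x2 - x0)) * ((x1 - x0) * (y4 - y0) - (y1 - y0) * (x4 - x0)) + ((x1 - x0) * (y2 - y0) - (y1 - y0) * (x2 - x0)) * ((x2 - x1) * (y3 - y1) - (y2 - y1) * (x3 - x1)) + ((x1 - x0) * (y4 - y0) - (y1 - y0) * (x4 - x0)) * ((x3 - x0) * (y4 - y0) - (y3 - y0) * (x4 - x0)) + ((x3 - x0) * (y4 - y0) - (y3 - y0) * (x4 - x0)) * ((x3 - x2) * (y4 - y2) - (y3 - y2) * (x4 - x2)) + ((x2 - x1) * (y3 - y1) - (y2 - y1) * (x3 - x1)) * ((x3 - x2) * (y4 - y2) - (y3 - y2) * (x4 - x2)) := by ring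
  have key2 : (2 * (((x1 - x0) * (y2 - y0) - (y1 - y0) * (x2 - x0)) + ((x2 - x0) * (y3 - y0) - (y2 - y0) * (x3 - x0)) + ((x3 - x0) * (y4 - y0) - (y3 - y0) * (x4 - x0))) - (((x1 - x0) * (y2 - y0) - (y1 - y0) * (x2 - x0)) + ((x2 - x1) * (y3 - y1) - (y2 - y1) * (x3 - x1)) + ((x3 - x2) * (y4 - y2) - (y3 - y2) * (x4 - x2)) + ((x3 - x0) * (y4 - y0) - (y3 - y0) * (x4 - x0)) + ((x1 - x0) * (y4 - y0) - (y1 - y0) * (x4 - x0)))) * (((x1 - x0) * (y2 - y0) - (y1 - y0) * (x2 - x0)) + ((x2 - x0) * (y3 - y0) - (y2 - y0) * (x3 - x0)) + ((x3 - x0) * (y4 - y0) - (y3 - y0) * (x4 - x0))) = ((x1 - x0) * (y2 - y0) - (y1 - y0) * (x2 - x0)) * ((x3 - x1) * (y4 - y1) - (y3 - y1) * (x4 - x1)) + ((x1 - x0) * (y3 - y0) - (y1 - y0) * (x3 - x0)) * ((x3 - x2) * (y4 - y2) - (y3 - y2) * (x4 - x2)) + ((x1 - x0) * (y4 - y0)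 - (y1 - y0) * (x4 - x0)) * ((x2 - x0) * (y3 - y0) - (y2 - y0) * (x3 - x0)) + ((x2 - x0) * (y4 - y0) - (y2 - y0) * (x4 - x0)) * ((x2 - x1) * (y3 - y1) - (y2 - y1) * (x3 - x1)) + ((x3 - x0) * (y4 - y0) - (y3 - y0) * (x4 - x0)) * ((x2 - x1) * (y4 - y1) - (y2 - y1) * (x4 - x1)) := by ring
  have hP1 : (0:ℝ) < ((((x1 - x0) * (y2 - y0) - (y1 - y0) * (x2 - x0)) + ((x2 - x1) * (y3 - y1) - (y2 - y1) * (x3 - x1)) + ((x3 - x2) * (y4 - y2) - (y3 - y2) * (x4 - x2)) + ((x3 - x0) * (y4 - y0) - (y3 - y0) * (x4 - x0)) + ((x1 - x0) * (y4 - y0) - (y1 - y0) * (x4 - x0))) - (((x1 - x0) * (y2 - y0) - (y1 - y0) * (x2 - x0)) + ((x2 - x0) * (y3 - y0) - (y2 - y0) * (x3 - x0)) + ((x3 - x0) * (y4 - y0) - (y3 - y0) * (x4 - x0)))) * (((x1 - x0) * (y2 - y0) - (y1 - y0) * (x2 - x0)) + ((x2 - x0) * (y3 - y0) - (y2 - y0)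 * (x3 - x0)) + ((x3 - x0) * (y4 - y0) - (y3 - y0) * (x4 - x0))) := by
    rw [key1]
    have := mul_pos t012 t014; have := mul_pos t012 t123; have := mul_pos t014 t034; have := mul_pos t034 t234; have := mul_pos t123 t234
    linarith
  have hP2 : (0:ℝ) < (2 * (((x1 - x0) * (y2 - y0) - (y1 - y0) * (x2 - x0)) + ((x2 - x0) * (y3 - y0) - (y2 - y0) * (x3 - x0)) + ((x3 - x0) * (y4 - y0) - (y3 - y0) * (x4 - x0))) - (((x1 - x0) * (y2 - y0) - (y1 - y0) * (x2 - x0)) + ((x2 - x1) * (y3 - y1) - (y2 - y1) * (x3 - x1)) + ((x3 - x2) * (y4 - y2) - (y3 - y2) * (x4 - x2)) + ((x3 - x0) * (y4 - y0) - (y3 - y0) * (x4 - x0)) + ((x1 - x0) * (y4 - y0) - (y1 - y0) * (x4 - x0)))) * (((x1 - x0) * (y2 - y0) - (y1 - y0) * (x2 - x0)) + ((x2 - x0) * (y3 - y0) - (y2 - y0) * (x3 - x0)) + ((x3 - x0) * (y4 - y0) - (y3 - y0) * (x4 - x0))) := by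
    rw [key2]
    have := mul_pos t012 t134; have := mul_pos t013 t234; have := mul_pos t014 t023; have := mul_pos t024 t123; have := mul_pos t034 t124
    linarith
  have hSgt : (((x1 - x0) * (y2 - y0) - (y1 - y0) * (x2 - x0)) + ((x2 - x0) * (y3 - y0) - (y2 - y0) * (x3 - x0)) + ((x3 - x0) * (y4 - y0) - (y3 - y0) * (x4 - x0))) < (((x1 - x0) * (y2 - y0) - (y1 - y0) * (x2 - x0)) + ((x2 - x1) * (y3 - y1) - (y2 - y1) * (x3 - x1)) + ((x3 - x2) * (y4 - y2) - (y3 - y2) * (x4 - x2)) + ((x3 - x0) * (y4 - y0) - (y3 - y0) * (x4 - x0)) + ((x1 - x0) * (y4 - y0) - (y1 - y0) * (x4 - x0))) := by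
    rcases mul_pos_iff.mp hP1 with ⟨h1, _⟩ | ⟨_, h2⟩
    · linarith
    · linarith
  have hSlt : (((x1 - x0) * (y2 - y0) - (y1 - y0) * (x2 - x0)) + ((x2 - x1) * (y3 - y1) - (y2 - y1) * (x3 - x1)) + ((x3 - x2) * (y4 - y2) - (y3 - y2) * (x4 - x2)) + ((x3 - x0) * (y4 - y0) - (y3 - y0) * (x4 - x0)) + ((x1 - x0) * (y4 - y0) - (y1 - y0) * (x4 - x0))) < 2 * (((x1 - x0) * (y2 - y0) - (y1 - y0) * (x2 - x0)) + ((x2 - x0) * (y3 - y0) - (y2 - y0) * (x3 - x0)) + ((x3 - x0) * (y4 - y0) - (y3 - y0) * (x4 - x0))) := by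
    rcases mul_pos_iff.mp hP2 with ⟨h1, _⟩ | ⟨_, h2⟩
    · linarith
    · linarith
  have hgt := mul_lt_mul_of_pos_left hSgt hc
  have hlt := mul_lt_mul_of_pos_left hSlt hc
  constructor
  · rw [lt_div_iff₀ (by linarith : (0:ℝ) < (((x1 - x0) * (y2 - y0) - (y1 - y0) * (x2 - x0)) + ((x2 - x0) * (y3 - y0) - (y2 - y0) * (x3 - x0)) + ((x3 - x0) * (y4 - y0) - (y3 - y0) * (x4 - x0))) / 2)]
    linarith
  · rw [div_lt_iff₀ (by linarith : (0:ℝ) < (((x1 - x0) * (y2 - y0) - (y1 - y0) * (x2 - x0)) + ((x2 - x0) * (y3 - y0) - (y2 - y0) * (x3 - x0)) + ((x3 - x0) * (y4 - y0) - (y3 - y0) * (x4 - x0))) / 2)]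
    linarith

set_option maxHeartbeats 1000000 in
theorem kasner_pentagon (m : ℝ) (hm : m ∈ Set.Ioo (0:ℝ) 1)
    (A : Fin 5 → ℝ × ℝ) (hA : IsConvexCCW A) :
    1 - 2 * (m * (1 - m)) < polyArea (kasner m A) / polyArea A ∧
    polyArea (kasner m A) / polyArea A < 1 - m * (1 - m) := by
  obtain ⟨hm0, hm1⟩ := hm
  have t012 : (0:ℝ) < (((A 1).1 - (A 0).1) * ((A 2).2 - (A 0).2) - ((A 1).2 - (A 0).2) * ((A 2).1 - (A 0).1)) := by
    have h := hA 0 2 (by decide) (by decide)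
    simp only [wedge, Prod.fst_sub, Prod.snd_sub, show ((0:Fin 5)+1 = 1) from rfl, show ((1:Fin 5)+1 = 2) from rfl, show ((2:Fin 5)+1 = 3) from rfl, show ((3:Fin 5)+1 = 4) from rfl, show ((4:Fin 5)+1 = 0) from rfl] at h
    linarith
  have t013 : (0:ℝ) < (((A 1).1 - (A 0).1) * ((A 3).2 - (A 0).2) - ((A 1).2 - (A 0).2) * ((A 3).1 - (A 0).1)) := by
    have h := hA 0 3 (by decide) (by decide)
    simp only [wedge, Prod.fst_sub, Prod.snd_sub, show ((0:Fin 5)+1 = 1) from rfl, show ((1:Fin 5)+1 = 2) from rfl, show ((2:Fin 5)+1 = 3) from rfl, show ((3:Fin 5)+1 = 4) from rfl, show ((4:Fin 5)+1 = 0) from rfl] at h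
    linarith
  have t014 : (0:ℝ) < (((A 1).1 - (A 0).1) * ((A 4).2 - (A 0).2) - ((A 1).2 - (A 0).2) * ((A 4).1 - (A 0).1)) := by
    have h := hA 0 4 (by decide) (by decide)
    simp only [wedge, Prod.fst_sub, Prod.snd_sub, show ((0:Fin 5)+1 = 1) from rfl, show ((1:Fin 5)+1 = 2) from rfl, show ((2:Fin 5)+1 = 3) from rfl, show ((3:Fin 5)+1 = 4) from rfl, show ((4:Fin 5)+1 = 0) from rfl] at h
    linarith
  have t023 : (0:ℝ) < (((A 2).1 - (A 0).1) * ((A 3).2 - (A 0).2) - ((A 2).2 - (A 0).2) * ((A 3).1 - (A 0).1)) := by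
    have h := hA 2 0 (by decide) (by decide)
    simp only [wedge, Prod.fst_sub, Prod.snd_sub, show ((0:Fin 5)+1 = 1) from rfl, show ((1:Fin 5)+1 = 2) from rfl, show ((2:Fin 5)+1 = 3) from rfl, show ((3:Fin 5)+1 = 4) from rfl, show ((4:Fin 5)+1 = 0) from rfl] at h
    linarith
  have t024 : (0:ℝ) < (((A 2).1 - (A 0).1) * ((A 4).2 - (A 0).2) - ((A 2).2 - (A 0).2) * ((A 4).1 - (A 0).1)) := by
    have h := hA 4 2 (by decide) (by decide)
    simp only [wedge, Prod.fst_sub, Prod.snd_sub, show ((0:Fin 5)+1 = 1) from rfl, show ((1:Fin 5)+1 = 2) from rfl, show ((2:Fin 5)+1 = 3) from rfl, show ((3:Fin 5)+1 = 4) from rfl, show ((4:Fin 5)+1 = 0) from rfl] at h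
    linarith
  have t034 : (0:ℝ) < (((A 3).1 - (A 0).1) * ((A 4).2 - (A 0).2) - ((A 3).2 - (A 0).2) * ((A 4).1 - (A 0).1)) := by
    have h := hA 3 0 (by decide) (by decide)
    simp only [wedge, Prod.fst_sub, Prod.snd_sub, show ((0:Fin 5)+1 = 1) from rfl, show ((1:Fin 5)+1 = 2) from rfl, show ((2:Fin 5)+1 = 3) from rfl, show ((3:Fin 5)+1 = 4) from rfl, show ((4:Fin 5)+1 = 0) from rfl] at h
    linarith
  have t123 : (0:ℝ) < (((A 2).1 - (A 1).1) * ((A 3).2 - (A 1).2) - ((A 2).2 - (A 1).2) * ((A 3).1 - (A 1).1)) := by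
    have h := hA 1 3 (by decide) (by decide)
    simp only [wedge, Prod.fst_sub, Prod.snd_sub, show ((0:Fin 5)+1 = 1) from rfl, show ((1:Fin 5)+1 = 2) from rfl, show ((2:Fin 5)+1 = 3) from rfl, show ((3:Fin 5)+1 = 4) from rfl, show ((4:Fin 5)+1 = 0) from rfl] at h
    linarith
  have t124 : (0:ℝ) < (((A 2).1 - (A 1).1) * ((A 4).2 - (A 1).2) - ((A 2).2 - (A 1).2) * ((A 4).1 - (A 1).1)) := by
    have h := hA 1 4 (by decide) (by decide)
    simp only [wedge, Prod.fst_sub, Prod.snd_sub, show ((0:Fin 5)+1 = 1) from rfl, show ((1:Fin 5)+1 = 2) from rfl, show ((2:Fin 5)+1 = 3) from rfl, show ((3:Fin 5)+1 = 4) from rfl, show ((4:Fin 5)+1 = 0) from rfl] at h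
    linarith
  have t134 : (0:ℝ) < (((A 3).1 - (A 1).1) * ((A 4).2 - (A 1).2) - ((A 3).2 - (A 1).2) * ((A 4).1 - (A 1).1)) := by
    have h := hA 3 1 (by decide) (by decide)
    simp only [wedge, Prod.fst_sub, Prod.snd_sub, show ((0:Fin 5)+1 = 1) from rfl, show ((1:Fin 5)+1 = 2) from rfl, show ((2:Fin 5)+1 = 3) from rfl, show ((3:Fin 5)+1 = 4) from rfl, show ((4:Fin 5)+1 = 0) from rfl] at h
    linarith
  have t234 : (0:ℝ) < (((A 3).1 - (A 2).1) * ((A 4).2 - (A 2).2) - ((A 3).2 - (A 2).2) * ((A 4).1 - (A 2).1)) := by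
    have h := hA 2 4 (by decide) (by decide)
    simp only [wedge, Prod.fst_sub, Prod.snd_sub, show ((0:Fin 5)+1 = 1) from rfl, show ((1:Fin 5)+1 = 2) from rfl, show ((2:Fin 5)+1 = 3) from rfl, show ((3:Fin 5)+1 = 4) from rfl, show ((4:Fin 5)+1 = 0) from rfl] at h
    linarith
  have hD : polyArea A = ((((A 1).1 - (A 0).1) * ((A 2).2 - (A 0).2) - ((A 1).2 - (A 0).2) * ((A 2).1 - (A 0).1)) + (((A 2).1 - (A 0).1) * ((A 3).2 - (A 0).2) - ((A 2).2 - (A 0).2) * ((A 3).1 - (A 0).1)) + (((A 3).1 - (A 0).1) * ((A 4).2 - (A 0).2) - ((A 3).2 - (A 0).2) * ((A 4).1 - (A 0).1))) / 2 := by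
    simp only [polyArea, Fin.sum_univ_five, wedge, show ((0:Fin 5)+1 = 1) from rfl, show ((1:Fin 5)+1 = 2) from rfl, show ((2:Fin 5)+1 = 3) from rfl, show ((3:Fin 5)+1 = 4) from rfl, show ((4:Fin 5)+1 = 0) from rfl]
    ring
  have hK : polyArea (kasner m A) = ((((A 1).1 - (A 0).1) * ((A 2).2 - (A 0).2) - ((A 1).2 - (A 0).2) * ((A 2).1 - (A 0).1)) + (((A 2).1 - (A 0).1) * ((A 3).2 - (A 0).2) - ((A 2).2 - (A 0).2) * ((A 3).1 - (A 0).1)) + (((A 3).1 - (A 0).1) * ((A 4).2 - (A 0).2) - ((A 3).2 - (A 0).2) * ((A 4).1 - (A 0).1))) / 2 - m * (1 - m) * (((((A 1).1 - (A 0).1) * ((A 2).2 - (A 0).2) - ((A 1).2 - (A 0).2) * ((A 2).1 - (A 0).1)) + (((A 2).1 - (A 1).1) * ((A 3).2 - (A 1).2) - ((A 2).2 - (A 1).2) * ((A 3).1 - (A 1).1)) + (((A 3).1 - (A 2).1) * ((A 4).2 - (A 2).2) - ((A 3).2 - (A 2).2) * ((A 4).1 - (A 2).1)) + (((A 3).1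 - (A 0).1) * ((A 4).2 - (A 0).2) - ((A 3).2 - (A 0).2) * ((A 4).1 - (A 0).1)) + (((A 1).1 - (A 0).1) * ((A 4).2 - (A 0).2) - ((A 1).2 - (A 0).2) * ((A 4).1 - (A 0).1))) / 2) := by
    simp only [polyArea, kasner, wedge, Fin.sum_univ_five, Prod.fst_add, Prod.snd_add, Prod.fst_sub, Prod.snd_sub, Prod.smul_fst, Prod.smul_snd, smul_eq_mul, show ((0:Fin 5)+1 = 1) from rfl, show ((1:Fin 5)+1 = 2) from rfl, show ((2:Fin 5)+1 = 3) from rfl, show ((3:Fin 5)+1 = 4) from rfl, show ((4:Fin 5)+1 = 0) from rfl]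
    ring
  rw [hK, hD]
  exact kasner_aux m (A 0).1 (A 0).2 (A 1).1 (A 1).2 (A 2).1 (A 2).2 (A 3).1 (A 3).2 (A 4).1 (A 4).2 hm0 hm1 t012 t013 t014 t023 t024 t034 t123 t124 t134 t234
end

section
/- For every m ∈ (0,1) and every ε > 0 there exists a convex pentagon K with first m-Kasner descendant K' such that Δ(K')/Δ(K) < 1 − 2m(1−m) + ε, and there exists a convex pentagon K such that Δ(K')/Δ(K) > 1 − m(1−m) − ε. Hence the bounds 1 − 2m(1−m) and 1 − m(1−m) for the pentagon area ratio are sharp. -/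
open scoped BigOperators

set_option maxHeartbeats 1000000 in
theorem kasner_pentagon_sharp (m : ℝ) (hm : m ∈ Set.Ioo (0:ℝ) 1)
    (ε : ℝ) (hε : 0 < ε) :
    (∃ A : Fin 5 → ℝ × ℝ, IsConvexCCW A ∧
      polyArea (kasner m A) / polyArea A < 1 - 2 * (m * (1 - m)) + ε) ∧
    (∃ A : Fin 5 → ℝ × ℝ, IsConvexCCW A ∧
      polyArea (kasner m A) / polyArea A > 1 - m * (1 - m) - ε) := by
  obtain ⟨hm0, hm1⟩ := hm
  set d : ℝ := min ε 1 / 4 with hdef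
  have hd0 : 0 < d := by positivity
  have hd1 : d ≤ 1/4 := by
    have : min ε 1 ≤ 1 := min_le_right _ _
    simp only [hdef]; linarith
  have hdε : 4 * d ≤ ε := by
    have : min ε 1 ≤ ε := min_le_left _ _
    simp only [hdef]; linarith
  have hmm : 0 < m * (1 - m) := mul_pos hm0 (by linarith)
  have hmm4 : m * (1 - m) ≤ 1/4 := by nlinarith [sq_nonneg (1 - 2*m)]
  constructor
  · refine ⟨![((0:ℝ),(0:ℝ)), (1,0), (1/2+d,1-d^2), (1/2,1), (1/2-d,1-d^2)], ?_, ?_⟩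
    · intro i j hji hji1
      clear_value d; clear hdef
      fin_cases i <;> fin_cases j <;>
        simp_all [wedge, abs_of_pos hd0] <;>
        nlinarith [sq_nonneg d, sq_nonneg (1-d), mul_pos hd0 (mul_pos hd0 hd0)]
    · have hA : polyArea ![((0:ℝ),(0:ℝ)), (1,0), (1/2+d,1-d^2), (1/2,1), (1/2-d,1-d^2)]
          = 1/2 + d - d^2/2 := by
        simp [polyArea, wedge, Fin.sum_univ_five]; norm_num; ring
      have hK : polyArea (kasner m
            ![((0:ℝ),(0:ℝ)), (1,0), (1/2+d,1-d^2), (1/2,1), (1/2-d,1-d^2)])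
          = ((1-m)^2+m^2)*(1/2 + d - d^2/2) + m*(1-m)*(d + d^2/2 - d^3) := by
        simp [kasner, polyArea, wedge, Fin.sum_univ_five]; norm_num; ring
      have hpos : (0:ℝ) < 1/2 + d - d^2/2 := by nlinarith
      rw [hA, hK, div_lt_iff₀ hpos]
      nlinarith [mul_pos hd0 hd0, mul_pos hd0 (mul_pos hd0 hd0),
        mul_le_mul hmm4 (show d + d^2/2 - d^3 ≤ 2*d by nlinarith)
          (by nlinarith) (by norm_num),
        mul_le_mul_of_nonneg_right hdε (show (0:ℝ) ≤ 1/2 + d - d^2/2 by nlinarith)]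
  · refine ⟨![((0:ℝ),(0:ℝ)), (1,0), (1,d), (1/2,1), (0,d)], ?_, ?_⟩
    · intro i j hji hji1
      clear_value d; clear hdef
      fin_cases i <;> fin_cases j <;>
        simp_all [wedge, abs_of_pos hd0] <;>
        nlinarith [sq_nonneg d, sq_nonneg (1-d), mul_pos hd0 (mul_pos hd0 hd0)]
    · have hA : polyArea ![((0:ℝ),(0:ℝ)), (1,0), (1,d), (1/2,1), (0,d)]
          = (1+d)/2 := by
        simp [polyArea, wedge, Fin.sum_univ_five]; norm_num; ring
      have hK : polyArea (kasner m ![((0:ℝ),(0:ℝ)), (1,0), (1,d), (1/2,1), (0,d)])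
          = ((1-m)^2+m^2)*((1+d)/2) + m*(1-m)*(1/2) := by
        simp [kasner, polyArea, wedge, Fin.sum_univ_five]; norm_num; ring
      have hpos : (0:ℝ) < (1+d)/2 := by linarith
      rw [hA, hK, gt_iff_lt, lt_div_iff₀ hpos]
      nlinarith [mul_le_mul_of_nonneg_right hmm4 (le_of_lt hd0),
        mul_le_mul_of_nonneg_right hdε (show (0:ℝ) ≤ (1+d)/2 by linarith)]
end

section
/- Let m ∈ (0,1), r := m(1−m), and let K be a convex pentagon with first m-Kasner descendant K' and second m-Kasner descendant K''. Then Δ(K'') = (2 − 5r)·Δ(K') − (1 − 5r + 5r²)·Δ(K). -/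
open scoped BigOperators

theorem kasner_pentagon_recurrence (m : ℝ) (hm : m ∈ Set.Ioo (0:ℝ) 1)
    (A : Fin 5 → ℝ × ℝ) (hA : IsConvexCCW A)
    (r : ℝ) (hr : r = m * (1 - m)) :
    polyArea (kasner m (kasner m A)) =
      (2 - 5 * r) * polyArea (kasner m A) - (1 - 5 * r + 5 * r ^ 2) * polyArea A := by
  subst hr
  simp only [polyArea, kasner, wedge, Fin.sum_univ_five, Prod.smul_mk, smul_eq_mul,
    Prod.fst_add, Prod.snd_add, Prod.fst_sub, Prod.snd_sub, Prod.smul_fst, Prod.smul_snd,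
    show (0:Fin 5)+1 = 1 from rfl, show (1:Fin 5)+1 = 2 from rfl,
    show (2:Fin 5)+1 = 3 from rfl, show (3:Fin 5)+1 = 4 from rfl,
    show (4:Fin 5)+1 = 0 from rfl]
  ring
end

section
/- Let K = ABCDE be a convex pentagon such that triangle ABC has minimal area among the five ears ABC, BCD, CDE, DEA, EAB. Let O = AD ∩ CE, set v₁ = OA, v₂ = OC scaled so that v₁ ∧ v₂ = 1, and write DO = a·v₁, EO = b·v₂, OB = c·v₁ + d·v₂ with a, b, c, d > 0. Then c + d > 1, c ≤ 1 and d ≤ 1. -/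
open scoped BigOperators

theorem pentagon_parameters (A B C D E O v₁ v₂ : ℝ × ℝ) (a b c d : ℝ)
    (hconv : IsConvexCCW ![A, B, C, D, E])
    (hmin : triArea A B C ≤ triArea B C D ∧ triArea A B C ≤ triArea C D E ∧
            triArea A B C ≤ triArea D E A ∧ triArea A B C ≤ triArea E A B)
    (hv₁ : v₁ = A - O) (hv₂ : v₂ = C - O) (hnorm : wedge v₁ v₂ = 1)
    (hD : O - D = a • v₁) (hE : O - E = b • v₂)
    (hB : B - O = c • v₁ + d • v₂)
    (ha : 0 < a) (hb : 0 < b) (hc : 0 < c) (hd : 0 < d) :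
    1 < c + d ∧ c ≤ 1 ∧ d ≤ 1 := by

  obtain ⟨hm1, hm2, hm3, hm4⟩ := hmin
  have hABC : 0 < triArea A B C := by
    have h := hconv 0 2 (by decide) (by decide)
    simpa [triArea, Matrix.cons_val_zero, Matrix.cons_val_one, Matrix.head_cons] using h
  obtain ⟨Ax, Ay⟩ := A
  obtain ⟨Bx, By⟩ := B
  obtain ⟨Cx, Cy⟩ := C
  obtain ⟨Dx, Dy⟩ := D
  obtain ⟨Ex', Ey⟩ := E
  obtain ⟨Ox, Oy⟩ := O
  obtain ⟨vx, vy⟩ := v₁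
  obtain ⟨ux, uy⟩ := v₂
  simp only [Prod.mk.injEq, Prod.mk_sub_mk, Prod.smul_mk, Prod.mk_add_mk, smul_eq_mul] at hv₁ hv₂ hD hE hB
  obtain ⟨h1, h2⟩ := hv₁
  obtain ⟨h3, h4⟩ := hv₂
  obtain ⟨h5, h6⟩ := hD
  obtain ⟨h7, h8⟩ := hE
  obtain ⟨h9, h10⟩ := hB
  simp only [triArea, wedge, Prod.mk_sub_mk] at hABC hm1 hm4 ⊢
  simp only [wedge] at hnorm
  subst h1 h2 h3 h4
  have hBx : Bx = Ox + (c * (Ax - Ox) + d * (Cx - Ox)) := by linarith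
  have hBy : By = Oy + (c * (Ay - Oy) + d * (Cy - Oy)) := by linarith
  have hDx : Dx = Ox - a * (Ax - Ox) := by linarith
  have hDy : Dy = Oy - a * (Ay - Oy) := by linarith
  have hEx : Ex' = Ox - b * (Cx - Ox) := by linarith
  have hEy : Ey = Oy - b * (Cy - Oy) := by linarith
  subst hBx hBy hDx hDy hEx hEy
  have eA : ((Ox + (c * (Ax - Ox) + d * (Cx - Ox)) - Ax) * (Cy - Ay) -
      (Oy + (c * (Ay - Oy) + d * (Cy - Oy)) - Ay) * (Cx - Ax)) / 2 = c + d - 1 := by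
    linear_combination (c + d - 1) * hnorm
  have eB : ((Cx - (Ox + (c * (Ax - Ox) + d * (Cx - Ox)))) * (Oy - a * (Ay - Oy) - (Oy + (c * (Ay - Oy) + d * (Cy - Oy)))) -
      (Cy - (Oy + (c * (Ay - Oy) + d * (Cy - Oy)))) * (Ox - a * (Ax - Ox) - (Ox + (c * (Ax - Ox) + d * (Cx - Ox))))) / 2
      = a + c - a * d := by
    linear_combination (a + c - a * d) * hnorm
  have eE : ((Ax - (Ox - b * (Cx - Ox))) * (Oy + (c * (Ay - Oy) + d * (Cy - Oy)) - (Oy - b * (Cy - Oy))) -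
      (Ay - (Oy - b * (Cy - Oy))) * (Ox + (c * (Ax - Ox) + d * (Cx - Ox)) - (Ox - b * (Cx - Ox)))) / 2
      = b + d - b * c := by
    linear_combination (b + d - b * c) * hnorm
  rw [eA] at hABC hm1 hm4
  rw [eB] at hm1
  rw [eE] at hm4
  refine ⟨by linarith, by nlinarith, by nlinarith⟩
end

section
/- In the pentagon parametrization where Δ(K) = a + b + c + d + ab with a,b,c,d > 0, the first m-Kasner descendant K' satisfies Δ(K')/Δ(K) = 1 − 2r + r·(1 + ad + bc)/(a + b + c + d + ab), where r = m(1−m). -/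
open scoped BigOperators

theorem pentagon_ratio_formula (m : ℝ) (hm : m ∈ Set.Ioo (0:ℝ) 1)
    (A B C D E O v₁ v₂ : ℝ × ℝ) (a b c d r : ℝ)
    (hconv : IsConvexCCW ![A, B, C, D, E])
    (hv₁ : v₁ = A - O) (hv₂ : v₂ = C - O) (hnorm : wedge v₁ v₂ = 1)
    (hD : O - D = a • v₁) (hE : O - E = b • v₂)
    (hB : B - O = c • v₁ + d • v₂)
    (ha : 0 < a) (hb : 0 < b) (hc : 0 < c) (hd : 0 < d)
    (hr : r = m * (1 - m)) :
    polyArea (kasner m ![A, B, C, D, E]) / polyArea ![A, B, C, D, E] =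
      1 - 2 * r + r * ((1 + a * d + b * c) / (a + b + c + d + a * b)) := by
  have hA : A = O + v₁ := by rw [hv₁]; abel
  have hC : C = O + v₂ := by rw [hv₂]; abel
  have hD' : D = O - a • v₁ := by rw [← hD]; abel
  have hE' : E = O - b • v₂ := by rw [← hE]; abel
  have hB' : B = O + (c • v₁ + d • v₂) := by rw [← hB]; abel
  subst hA hC hD' hE' hB' hr
  have hnorm' : v₁.1 * v₂.2 - v₁.2 * v₂.1 = 2 := by
    unfold wedge at hnorm; linarith
  have hS : polyArea ![O + v₁, O + (c • v₁ + d • v₂), O + v₂, O - a • v₁, O - b • v₂]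
      = a + b + c + d + a * b := by
    have h0 : (0:Fin 5)+1 = 1 := rfl
    have h1 : (1:Fin 5)+1 = 2 := rfl
    have h2 : (2:Fin 5)+1 = 3 := rfl
    have h3 : (3:Fin 5)+1 = 4 := rfl
    have h4 : (4:Fin 5)+1 = 0 := rfl
    simp only [polyArea, Fin.sum_univ_five, wedge, h0, h1, h2, h3, h4]
    simp only [Matrix.cons_val_zero, Matrix.cons_val_one, Matrix.head_cons,
      Matrix.cons_val_two, Matrix.tail_cons, Matrix.cons_val_three, Matrix.cons_val_four,
      Prod.fst_add, Prod.snd_add, Prod.fst_sub, Prod.snd_sub, Prod.smul_fst, Prod.smul_snd,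
      smul_eq_mul]
    linear_combination (a + b + c + d + a * b) / 2 * hnorm'
  have hN : polyArea (kasner m ![O + v₁, O + (c • v₁ + d • v₂), O + v₂, O - a • v₁, O - b • v₂])
      = (1 - 2 * (m * (1 - m))) * (a + b + c + d + a * b)
        + (m * (1 - m)) * (1 + a * d + b * c) := by
    have h0 : (0:Fin 5)+1 = 1 := rfl
    have h1 : (1:Fin 5)+1 = 2 := rfl
    have h2 : (2:Fin 5)+1 = 3 := rfl
    have h3 : (3:Fin 5)+1 = 4 := rfl
    have h4 : (4:Fin 5)+1 = 0 := rfl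
    simp only [polyArea, kasner, Fin.sum_univ_five, wedge, h0, h1, h2, h3, h4]
    simp only [Matrix.cons_val_zero, Matrix.cons_val_one, Matrix.head_cons,
      Matrix.cons_val_two, Matrix.tail_cons, Matrix.cons_val_three, Matrix.cons_val_four,
      Prod.fst_add, Prod.snd_add, Prod.fst_sub, Prod.snd_sub, Prod.smul_fst, Prod.smul_snd,
      smul_eq_mul]
    linear_combination ((1 - 2 * (m * (1 - m))) * (a + b + c + d + a * b)
        + (m * (1 - m)) * (1 + a * d + b * c)) / 2 * hnorm'
  rw [hS, hN]
  have hpos : (0:ℝ) < a + b + c + d + a * b := by positivity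
  field_simp
end

section
/- Let m ∈ (0,1) and let K be a convex hexagon with first m-Kasner descendant K'. Then 1 − 2m(1−m) < Δ(K')/Δ(K) < 1, and both bounds are best possible (neither can be improved over the class of convex hexagons). -/
open scoped BigOperators

set_option maxHeartbeats 1600000

/-! ### Auxiliary material -/

/-- A hexagon given by six explicit vertices. -/
def hexOf (p0 p1 p2 p3 p4 p5 : ℝ × ℝ) : Fin 6 → ℝ × ℝ := fun i =>
  match i with
  | 0 => p0 | 1 => p1 | 2 => p2 | 3 => p3 | 4 => p4 | 5 => p5

@[simp] lemma hexOf_0 (p0 p1 p2 p3 p4 p5 : ℝ × ℝ) : hexOf p0 p1 p2 p3 p4 p5 0 = p0 := rfl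
@[simp] lemma hexOf_1 (p0 p1 p2 p3 p4 p5 : ℝ × ℝ) : hexOf p0 p1 p2 p3 p4 p5 1 = p1 := rfl
@[simp] lemma hexOf_2 (p0 p1 p2 p3 p4 p5 : ℝ × ℝ) : hexOf p0 p1 p2 p3 p4 p5 2 = p2 := rfl
@[simp] lemma hexOf_3 (p0 p1 p2 p3 p4 p5 : ℝ × ℝ) : hexOf p0 p1 p2 p3 p4 p5 3 = p3 := rfl
@[simp] lemma hexOf_4 (p0 p1 p2 p3 p4 p5 : ℝ × ℝ) : hexOf p0 p1 p2 p3 p4 p5 4 = p4 := rfl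
@[simp] lemma hexOf_5 (p0 p1 p2 p3 p4 p5 : ℝ × ℝ) : hexOf p0 p1 p2 p3 p4 p5 5 = p5 := rfl

/-- The fundamental identity: the Kasner descendant loses `m(1-m)` times the sum of
the six "ear" triangles. -/
lemma kasner_poly (m : ℝ) (A : Fin 6 → ℝ × ℝ) :
    polyArea (kasner m A) = polyArea A - m * (1 - m) *
      (triArea (A 0) (A 1) (A 2) + triArea (A 1) (A 2) (A 3) + triArea (A 2) (A 3) (A 4)
       + triArea (A 3) (A 4) (A 5) + triArea (A 4) (A 5) (A 0) + triArea (A 5) (A 0) (A 1)) := by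
  simp [polyArea, kasner, triArea, wedge, Fin.sum_univ_six]
  ring

/-- Fan triangulation of the hexagon from vertex `A 0`. -/
lemma hex_fan (A : Fin 6 → ℝ × ℝ) :
    polyArea A = triArea (A 0) (A 1) (A 2) + triArea (A 2) (A 3) (A 0)
      + triArea (A 3) (A 4) (A 0) + triArea (A 4) (A 5) (A 0) := by
  simp [polyArea, triArea, wedge, Fin.sum_univ_six]
  ring

/-- Twice the hexagon area minus the six ears equals the two "big" triangles. -/
lemma hex_twoP (A : Fin 6 → ℝ × ℝ) :
    2 * polyArea A -
      (triArea (A 0) (A 1) (A 2) + triArea (A 1) (A 2) (A 3) + triArea (A 2) (A 3) (A 4)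
       + triArea (A 3) (A 4) (A 5) + triArea (A 4) (A 5) (A 0) + triArea (A 5) (A 0) (A 1))
    = triArea (A 0) (A 2) (A 4) + triArea (A 1) (A 3) (A 5) := by
  simp [polyArea, triArea, wedge, Fin.sum_univ_six]
  ring

/-- A Plücker-type identity certifying positivity of the triangle `A0 A2 A4`. -/
lemma pluck1 (A : Fin 6 → ℝ × ℝ) :
    triArea (A 0) (A 2) (A 4) * triArea (A 0) (A 1) (A 3)
      = triArea (A 0) (A 1) (A 2) * triArea (A 3) (A 4) (A 0)
      + triArea (A 0) (A 1) (A 4) * triArea (A 2) (A 3) (A 0) := by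
  simp only [triArea, wedge, Prod.fst_sub, Prod.snd_sub]; ring

/-- A Plücker-type identity certifying positivity of the triangle `A1 A3 A5`. -/
lemma pluck2 (A : Fin 6 → ℝ × ℝ) :
    triArea (A 1) (A 3) (A 5) * triArea (A 1) (A 2) (A 4)
      = triArea (A 1) (A 2) (A 3) * triArea (A 4) (A 5) (A 1)
      + triArea (A 1) (A 2) (A 5) * triArea (A 3) (A 4) (A 1) := by
  simp only [triArea, wedge, Prod.fst_sub, Prod.snd_sub]; ring

theorem kasner_hexagon (m : ℝ) (hm : m ∈ Set.Ioo (0:ℝ) 1) :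
    (∀ A : Fin 6 → ℝ × ℝ, IsConvexCCW A →
      1 - 2 * (m * (1 - m)) < polyArea (kasner m A) / polyArea A ∧
      polyArea (kasner m A) / polyArea A < 1) ∧
    (∀ ε : ℝ, 0 < ε →
      (∃ A : Fin 6 → ℝ × ℝ, IsConvexCCW A ∧
        polyArea (kasner m A) / polyArea A < 1 - 2 * (m * (1 - m)) + ε) ∧
      (∃ A : Fin 6 → ℝ × ℝ, IsConvexCCW A ∧
        1 - ε < polyArea (kasner m A) / polyArea A)) := by
  obtain ⟨hm1, hm2⟩ := hm
  have hq : 0 < m * (1 - m) := mul_pos hm1 (by linarith)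
  constructor
  · intro A hA
    have h02 : 0 < triArea (A 0) (A 1) (A 2) := by simpa [triArea] using hA 0 2 (by decide) (by decide)
    have h03 : 0 < triArea (A 0) (A 1) (A 3) := by simpa [triArea] using hA 0 3 (by decide) (by decide)
    have h04 : 0 < triArea (A 0) (A 1) (A 4) := by simpa [triArea] using hA 0 4 (by decide) (by decide)
    have h13 : 0 < triArea (A 1) (A 2) (A 3) := by simpa [triArea] using hA 1 3 (by decide) (by decide)
    have h14 : 0 < triArea (A 1) (A 2) (A 4) := by simpa [triArea] using hA 1 4 (by decide) (by decide)
    have h15 : 0 < triArea (A 1) (A 2) (A 5) := by simpa [triArea] using hA 1 5 (by decide) (by decide)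
    have h20 : 0 < triArea (A 2) (A 3) (A 0) := by simpa [triArea] using hA 2 0 (by decide) (by decide)
    have h24 : 0 < triArea (A 2) (A 3) (A 4) := by simpa [triArea] using hA 2 4 (by decide) (by decide)
    have h30 : 0 < triArea (A 3) (A 4) (A 0) := by simpa [triArea] using hA 3 0 (by decide) (by decide)
    have h31 : 0 < triArea (A 3) (A 4) (A 1) := by simpa [triArea] using hA 3 1 (by decide) (by decide)
    have h35 : 0 < triArea (A 3) (A 4) (A 5) := by simpa [triArea] using hA 3 5 (by decide) (by decide)
    have h40 : 0 < triArea (A 4) (A 5) (A 0) := by simpa [triArea] using hA 4 0 (by decide) (by decide)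
    have h41 : 0 < triArea (A 4) (A 5) (A 1) := by simpa [triArea] using hA 4 1 (by decide) (by decide)
    have h51 : 0 < triArea (A 5) (A 0) (A 1) := by simpa [triArea] using hA 5 1 (by decide) (by decide)
    have hP : 0 < polyArea A := by rw [hex_fan]; linarith
    have hS : 0 < triArea (A 0) (A 2) (A 4) := by
      nlinarith [pluck1 A, h03, mul_pos h02 h30, mul_pos h04 h20]
    have hS' : 0 < triArea (A 1) (A 3) (A 5) := by
      nlinarith [pluck2 A, h14, mul_pos h13 h41, mul_pos h15 h31]
    constructor
    · rw [lt_div_iff₀ hP]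
      have hmul : m * (1 - m) *
          (2 * polyArea A -
            (triArea (A 0) (A 1) (A 2) + triArea (A 1) (A 2) (A 3) + triArea (A 2) (A 3) (A 4)
             + triArea (A 3) (A 4) (A 5) + triArea (A 4) (A 5) (A 0) + triArea (A 5) (A 0) (A 1)))
          = m * (1 - m) * (triArea (A 0) (A 2) (A 4) + triArea (A 1) (A 3) (A 5)) := by
        rw [hex_twoP]
      nlinarith [kasner_poly m A, hmul, mul_pos hq (add_pos hS hS')]
    · rw [div_lt_one hP]
      have hT : 0 < triArea (A 0) (A 1) (A 2) + triArea (A 1) (A 2) (A 3) + triArea (A 2) (A 3) (A 4)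
          + triArea (A 3) (A 4) (A 5) + triArea (A 4) (A 5) (A 0) + triArea (A 5) (A 0) (A 1) := by
        linarith
      nlinarith [kasner_poly m A, mul_pos hq hT]
  · intro ε hε
    obtain ⟨d, hd, hd1, hd2⟩ : ∃ d : ℝ, 0 < d ∧ d ≤ 1/10 ∧ d ≤ ε/2 :=
      ⟨min (ε/2) (1/10), lt_min (by linarith) (by norm_num), min_le_right _ _, min_le_left _ _⟩
    have hq4 : 4 * (m * (1 - m)) ≤ 1 := by nlinarith [sq_nonneg (1 - 2*m)]
    constructor
    · -- lower bound is sharp: a hexagon degenerating to a triangle with a point on a side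
      set A : Fin 6 → ℝ × ℝ := hexOf (-1,0) (0,-1) (1,0) (d,d^2) (0,d^2+d^4) (-d,d^2) with hAdef
      refine ⟨A, ?_, ?_⟩
      · intro i j h1 h2
        fin_cases i <;> fin_cases j <;>
          first
          | exact absurd rfl h1
          | exact absurd rfl h2
          | (simp [hAdef, wedge] <;>
             nlinarith [pow_pos hd 2, pow_pos hd 3, pow_pos hd 4, pow_pos hd 5, hd, hd1,
               mul_pos hd hd])
      · have hPe : polyArea A = 1 + d^2 + d^3 + d^5 := by
          simp [hAdef, polyArea, wedge, Fin.sum_univ_six]; ring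
        have hKe : polyArea (kasner m A)
            = (1 + d^2 + d^3 + d^5) - m * (1 - m) * (2 - d + d^2 + d^3 - d^4 + 2*d^5) := by
          simp [hAdef, polyArea, kasner, wedge, Fin.sum_univ_six]; ring
        have hP : 0 < polyArea A := by rw [hPe]; positivity
        rw [div_lt_iff₀ hP, hKe, hPe]
        have e2 : d^2 ≤ d := by nlinarith
        have e3 : d^3 ≤ d := by nlinarith
        have e4 : d^4 ≤ d := by nlinarith
        nlinarith [mul_nonneg (sq_nonneg (1 - 2*m)) hd.le,
          mul_nonneg (sq_nonneg (1 - 2*m)) (pow_pos hd 2).le,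
          mul_nonneg (sq_nonneg (1 - 2*m)) (pow_pos hd 3).le,
          mul_nonneg (sq_nonneg (1 - 2*m)) (pow_pos hd 4).le,
          mul_nonneg hε.le (pow_pos hd 2).le,
          mul_nonneg hε.le (pow_pos hd 3).le,
          mul_nonneg hε.le (pow_pos hd 5).le, hd2, hε, e2, e3, e4]
    · -- upper bound is sharp: a hexagon degenerating to a triangle with doubled vertices
      set A : Fin 6 → ℝ × ℝ := hexOf (d,0) (1-d,0) (1-d,d) (d,1-d) (0,1-d) (0,d) with hAdef
      refine ⟨A, ?_, ?_⟩
      · intro i j h1 h2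
        fin_cases i <;> fin_cases j <;>
          first
          | exact absurd rfl h1
          | exact absurd rfl h2
          | (simp [hAdef, wedge] <;>
             nlinarith [pow_pos hd 2, pow_pos hd 3, hd, hd1, mul_pos hd hd])
      · have hPe : polyArea A = 1/2 - 3/2 * d^2 := by
          simp [hAdef, polyArea, wedge, Fin.sum_univ_six]; ring
        have hKe : polyArea (kasner m A)
            = (1/2 - 3/2 * d^2) - m * (1 - m) * (3*d - 6*d^2) := by
          simp [hAdef, polyArea, kasner, wedge, Fin.sum_univ_six]; ring
        have hP : 0 < polyArea A := by rw [hPe]; nlinarith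
        rw [lt_div_iff₀ hP, hKe, hPe]
        nlinarith [mul_nonneg (sq_nonneg (1 - 2*m)) hd.le,
          mul_nonneg (mul_pos hq hd).le hd.le,
          mul_nonneg hε.le (by nlinarith : (0:ℝ) ≤ 1/100 - d^2), hd2, hε]
end

section
/- In the hexagon parametrization with positive parameters a, b, c, d, e, f, writing S = a+b+c+d+e+f, T = ab+bc+cd+de+ef+fa, U = ac+bd+ce+df+ea+fb, the hexagon area is Δ(K) = 1 + S + T, the sum of the areas of the six ears is S + 2T − U, and Δ(K')/Δ(K) = (1 − 2r) + r·(2 + S + U)/(1 + S + T), where r = m(1−m). -/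
open scoped BigOperators

lemma hexArea (A B C D E F : ℝ × ℝ) : polyArea ![A, B, C, D, E, F] =
    wedge A B + wedge B C + wedge C D + wedge D E + wedge E F + wedge F A := by
  simp [polyArea, Fin.sum_univ_six, show ((![A,B,C,D,E,F] : Fin 6 → ℝ×ℝ) 5) = F from rfl]

lemma kasnerHexArea (m : ℝ) (A B C D E F : ℝ × ℝ) :
    polyArea (kasner m ![A, B, C, D, E, F]) =
    wedge (A + m • (B - A)) (B + m • (C - B)) + wedge (B + m • (C - B)) (C + m • (D - C)) +
    wedge (C + m • (D - C)) (D + m • (E - D)) + wedge (D + m • (E - D)) (E + m • (F - E)) +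
    wedge (E + m • (F - E)) (F + m • (A - F)) + wedge (F + m • (A - F)) (A + m • (B - A)) := by
  simp [polyArea, kasner, Fin.sum_univ_six,
    show ((![A,B,C,D,E,F] : Fin 6 → ℝ×ℝ) 5) = F from rfl]

theorem hexagon_parametrization (m : ℝ) (hm : m ∈ Set.Ioo (0:ℝ) 1)
    (A B C D E F M N P v₁ v₂ v₃ : ℝ × ℝ) (a b c d e f r S T U : ℝ)
    (hconv : IsConvexCCW ![A, B, C, D, E, F])
    (hv₁ : v₁ = N - M) (hv₂ : v₂ = P - M) (hv₃ : v₃ = P - N)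
    (hnorm : wedge v₁ v₂ = 1)
    (hAM : M - A = a • v₁) (hBM : M - B = b • v₂) (hCN : N - C = c • v₃)
    (hND : D - N = d • v₁) (hPE : E - P = e • v₂) (hPF : F - P = f • v₃)
    (ha : 0 < a) (hb : 0 < b) (hc : 0 < c) (hd : 0 < d) (he : 0 < e) (hf : 0 < f)
    (hr : r = m * (1 - m))
    (hS : S = a + b + c + d + e + f)
    (hT : T = a * b + b * c + c * d + d * e + e * f + f * a)
    (hU : U = a * c + b * d + c * e + d * f + e * a + f * b) :
    polyArea ![A, B, C, D, E, F] = 1 + S + T ∧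
    triArea A B C + triArea B C D + triArea C D E + triArea D E F +
      triArea E F A + triArea F A B = S + 2 * T - U ∧
    polyArea (kasner m ![A, B, C, D, E, F]) / polyArea ![A, B, C, D, E, F] =
      (1 - 2 * r) + r * ((2 + S + U) / (1 + S + T)) := by
  subst hv₁ hv₂ hv₃ hr hS hT hU
  obtain ⟨A1, A2⟩ := A; obtain ⟨B1, B2⟩ := B; obtain ⟨C1, C2⟩ := C
  obtain ⟨D1, D2⟩ := D; obtain ⟨E1, E2⟩ := E; obtain ⟨F1, F2⟩ := F
  obtain ⟨M1, M2⟩ := M; obtain ⟨N1, N2⟩ := N; obtain ⟨P1, P2⟩ := P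
  simp only [Prod.mk_sub_mk, Prod.smul_mk, smul_eq_mul, Prod.mk.injEq, wedge] at hAM hBM hCN hND hPE hPF hnorm
  obtain ⟨hAM1, hAM2⟩ := hAM
  obtain ⟨hBM1, hBM2⟩ := hBM
  obtain ⟨hCN1, hCN2⟩ := hCN
  obtain ⟨hND1, hND2⟩ := hND
  obtain ⟨hPE1, hPE2⟩ := hPE
  obtain ⟨hPF1, hPF2⟩ := hPF
  have eA1 : A1 = M1 - a * (N1 - M1) := by linarith
  have eA2 : A2 = M2 - a * (N2 - M2) := by linarith
  have eB1 : B1 = M1 - b * (P1 - M1) := by linarith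
  have eB2 : B2 = M2 - b * (P2 - M2) := by linarith
  have eC1 : C1 = N1 - c * (P1 - N1) := by linarith
  have eC2 : C2 = N2 - c * (P2 - N2) := by linarith
  have eD1 : D1 = N1 + d * (N1 - M1) := by linarith
  have eD2 : D2 = N2 + d * (N2 - M2) := by linarith
  have eE1 : E1 = P1 + e * (P1 - M1) := by linarith
  have eE2 : E2 = P2 + e * (P2 - M2) := by linarith
  have eF1 : F1 = P1 + f * (P1 - N1) := by linarith
  have eF2 : F2 = P2 + f * (P2 - N2) := by linarith
  subst eA1 eA2 eB1 eB2 eC1 eC2 eD1 eD2 eE1 eE2 eF1 eF2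
  have hpos : (0:ℝ) < 1 + (a + b + c + d + e + f) +
      (a * b + b * c + c * d + d * e + e * f + f * a) := by positivity
  have h1 : polyArea ![((M1 - a * (N1 - M1), M2 - a * (N2 - M2)) : ℝ × ℝ),
      (M1 - b * (P1 - M1), M2 - b * (P2 - M2)), (N1 - c * (P1 - N1), N2 - c * (P2 - N2)),
      (N1 + d * (N1 - M1), N2 + d * (N2 - M2)), (P1 + e * (P1 - M1), P2 + e * (P2 - M2)),
      (P1 + f * (P1 - N1), P2 + f * (P2 - N2))] =
      1 + (a + b + c + d + e + f) + (a * b + b * c + c * d + d * e + e * f + f * a) := by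
    rw [hexArea]
    simp only [wedge]
    linear_combination (1 + (a + b + c + d + e + f) +
      (a * b + b * c + c * d + d * e + e * f + f * a)) * hnorm
  refine ⟨h1, ?_, ?_⟩
  · simp only [triArea, wedge, Prod.mk_sub_mk]
    linear_combination ((a + b + c + d + e + f) +
      2 * (a * b + b * c + c * d + d * e + e * f + f * a) -
      (a * c + b * d + c * e + d * f + e * a + f * b)) * hnorm
  · have h2 : polyArea (kasner m ![((M1 - a * (N1 - M1), M2 - a * (N2 - M2)) : ℝ × ℝ),
        (M1 - b * (P1 - M1), M2 - b * (P2 - M2)), (N1 - c * (P1 - N1), N2 - c * (P2 - N2)),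
        (N1 + d * (N1 - M1), N2 + d * (N2 - M2)), (P1 + e * (P1 - M1), P2 + e * (P2 - M2)),
        (P1 + f * (P1 - N1), P2 + f * (P2 - N2))]) =
        (1 - 2 * (m * (1 - m))) * (1 + (a + b + c + d + e + f) +
          (a * b + b * c + c * d + d * e + e * f + f * a)) +
        m * (1 - m) * (2 + (a + b + c + d + e + f) +
          (a * c + b * d + c * e + d * f + e * a + f * b)) := by
      rw [kasnerHexArea]
      simp only [wedge, Prod.mk_sub_mk, Prod.smul_mk, smul_eq_mul, Prod.mk_add_mk]
      linear_combination ((1 - 2 * (m * (1 - m))) * (1 + (a + b + c + d + e + f) +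
          (a * b + b * c + c * d + d * e + e * f + f * a)) +
        m * (1 - m) * (2 + (a + b + c + d + e + f) +
          (a * c + b * d + c * e + d * f + e * a + f * b))) * hnorm
    rw [h1, h2]
    field_simp
end

section
/- For positive reals a,b,c,d,e,f with S = a+b+c+d+e+f, T = ab+bc+cd+de+ef+fa, U = ac+bd+ce+df+ea+fb arising from a convex hexagon, we have 0 < (2 + S + U)/(1 + S + T) < 2; taking a=b=c=d=1, e=f=n the ratio tends to 0 as n → ∞, and taking a=b=c=d=e=f → 0 the ratio tends to 2. -/
open scoped BigOperators

private lemma wedge_points (M x y : ℝ × ℝ) (p1 q1 p2 q2 p3 q3 : ℝ) :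
    wedge ((M + p2•x + q2•y) - (M + p1•x + q1•y)) ((M + p3•x + q3•y) - (M + p1•x + q1•y))
      = ((p2-p1)*(q3-q1) - (q2-q1)*(p3-p1)) * wedge x y := by
  simp only [wedge, Prod.fst_add, Prod.snd_add, Prod.fst_sub, Prod.snd_sub,
    Prod.smul_fst, Prod.smul_snd, smul_eq_mul]
  ring

theorem hexagon_ratio_algebra :
    (∀ (A B C D E F M N P v₁ v₂ v₃ : ℝ × ℝ) (a b c d e f S T U : ℝ),
      IsConvexCCW ![A, B, C, D, E, F] →
      v₁ = N - M → v₂ = P - M → v₃ = P - N → wedge v₁ v₂ = 1 →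
      M - A = a • v₁ → M - B = b • v₂ → N - C = c • v₃ →
      D - N = d • v₁ → E - P = e • v₂ → F - P = f • v₃ →
      0 < a → 0 < b → 0 < c → 0 < d → 0 < e → 0 < f →
      S = a + b + c + d + e + f →
      T = a * b + b * c + c * d + d * e + e * f + f * a →
      U = a * c + b * d + c * e + d * f + e * a + f * b →
      0 < (2 + S + U) / (1 + S + T) ∧ (2 + S + U) / (1 + S + T) < 2) ∧
    Filter.Tendsto (fun n : ℝ => (6 * n + 8) / (n ^ 2 + 4 * n + 8))
      Filter.atTop (nhds 0) ∧
    Filter.Tendsto (fun a : ℝ => (2 + 6 * a + 6 * a ^ 2) / (1 + 6 * a + 6 * a ^ 2))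
      (nhdsWithin 0 (Set.Ioi 0)) (nhds 2) := by
  refine ⟨?_, ?_, ?_⟩
  · intro A B C D E F M N P v₁ v₂ v₃ a b c d e f S T U hconv hv1 hv2 hv3 hw
      hMA hMB hNC hDN hEP hFP ha hb hc hd he hf hS hT hU
    have hv3' : v₃ = v₂ - v₁ := by rw [hv3, hv1, hv2]; abel
    have hA : A = M + (-a) • v₁ + (0:ℝ) • v₂ := by
      have : A = M - a • v₁ := by rw [← hMA]; abel
      rw [this]; module
    have hB : B = M + (0:ℝ) • v₁ + (-b) • v₂ := by
      have : B = M - b • v₂ := by rw [← hMB]; abel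
      rw [this]; module
    have hN : N = M + v₁ := by rw [hv1]; abel
    have hP : P = M + v₂ := by rw [hv2]; abel
    have hC : C = M + (1+c) • v₁ + (-c) • v₂ := by
      have : C = N - c • v₃ := by rw [← hNC]; abel
      rw [this, hN, hv3']; module
    have hD : D = M + (1+d) • v₁ + (0:ℝ) • v₂ := by
      have : D = N + d • v₁ := by rw [← hDN]; abel
      rw [this, hN]; module
    have hE : E = M + (0:ℝ) • v₁ + (1+e) • v₂ := by
      have : E = P + e • v₂ := by rw [← hEP]; abel
      rw [this, hP]; module
    have hF : F = M + (-f) • v₁ + (1+f) • v₂ := by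
      have : F = P + f • v₃ := by rw [← hFP]; abel
      rw [this, hP, hv3']; module
    have h0 : 0 < wedge (B - A) (C - A) := hconv 0 2 (by decide) (by decide)
    have h1 : 0 < wedge (C - B) (D - B) := hconv 1 3 (by decide) (by decide)
    have h2 : 0 < wedge (D - C) (E - C) := hconv 2 4 (by decide) (by decide)
    have h3 : 0 < wedge (E - D) (F - D) := hconv 3 5 (by decide) (by decide)
    have h4 : 0 < wedge (F - E) (A - E) := hconv 4 0 (by decide) (by decide)
    have h5 : 0 < wedge (A - F) (B - F) := hconv 5 1 (by decide) (by decide)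
    rw [hA, hB, hC, wedge_points, hw, mul_one] at h0
    rw [hB, hC, hD, wedge_points, hw, mul_one] at h1
    rw [hC, hD, hE, wedge_points, hw, mul_one] at h2
    rw [hD, hE, hF, wedge_points, hw, mul_one] at h3
    rw [hE, hF, hA, wedge_points, hw, mul_one] at h4
    rw [hF, hA, hB, wedge_points, hw, mul_one] at h5
    have hden : 0 < 1 + S + T := by
      rw [hS, hT]; positivity
    constructor
    · apply div_pos _ hden
      rw [hS, hU]; positivity
    · rw [div_lt_iff₀ hden, hS, hT, hU]
      nlinarith [h0, h1, h2, h3, h4, h5]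
  · have hpow : Filter.Tendsto (fun n : ℝ => n ^ 2) Filter.atTop Filter.atTop :=
      Filter.tendsto_pow_atTop two_ne_zero
    have hid : Filter.Tendsto (fun n : ℝ => n) Filter.atTop Filter.atTop :=
      Filter.tendsto_id
    have t6 : Filter.Tendsto (fun n : ℝ => 6 / n) Filter.atTop (nhds 0) :=
      Filter.Tendsto.div_atTop tendsto_const_nhds hid
    have t4 : Filter.Tendsto (fun n : ℝ => 4 / n) Filter.atTop (nhds 0) :=
      Filter.Tendsto.div_atTop tendsto_const_nhds hid
    have t8 : Filter.Tendsto (fun n : ℝ => 8 / n ^ 2) Filter.atTop (nhds 0) :=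
      Filter.Tendsto.div_atTop tendsto_const_nhds hpow
    have hnum : Filter.Tendsto (fun n : ℝ => 6 / n + 8 / n ^ 2) Filter.atTop (nhds 0) := by
      simpa using t6.add t8
    have hden : Filter.Tendsto (fun n : ℝ => 1 + 4 / n + 8 / n ^ 2) Filter.atTop (nhds 1) := by
      have := (tendsto_const_nhds (x := (1:ℝ)) (f := Filter.atTop (α := ℝ))).add (t4.add t8)
      simpa [add_assoc] using this
    have key := hnum.div hden (by norm_num)
    rw [show (0:ℝ)/1 = 0 by norm_num] at key
    apply key.congr'
    filter_upwards [Filter.eventually_gt_atTop (0:ℝ)] with n hn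
    have hn2 : n ≠ 0 := ne_of_gt hn
    simp only [Pi.div_apply]
    field_simp
  · have hc : ContinuousAt (fun a : ℝ => (2 + 6 * a + 6 * a ^ 2) / (1 + 6 * a + 6 * a ^ 2)) 0 := by
      apply ContinuousAt.div (by fun_prop) (by fun_prop)
      norm_num
    have := hc.continuousWithinAt (s := Set.Ioi (0:ℝ))
    unfold ContinuousWithinAt at this
    norm_num at this
    exact this
end

section
/- In the hexagon parametrization with a = min{a,b,c,d,e,f}, the side vectors satisfy 2·(FA ∧ AB) ≤ (EF ∧ AB) + (FA ∧ BC), where ∧ denotes the wedge product. Equivalently, 0 ≤ 1 − 2a + c + f − 3ab + ac + ae − 3af + 4bf. -/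
open scoped BigOperators

theorem hexagon_wedge_inequality
    (A B C D E F M N P v₁ v₂ v₃ : ℝ × ℝ) (a b c d e f : ℝ)
    (hconv : IsConvexCCW ![A, B, C, D, E, F])
    (hv₁ : v₁ = N - M) (hv₂ : v₂ = P - M) (hv₃ : v₃ = P - N)
    (hnorm : wedge v₁ v₂ = 1)
    (hAM : M - A = a • v₁) (hBM : M - B = b • v₂) (hCN : N - C = c • v₃)
    (hND : D - N = d • v₁) (hPE : E - P = e • v₂) (hPF : F - P = f • v₃)
    (ha : 0 < a) (hb : 0 < b) (hc : 0 < c) (hd : 0 < d) (he : 0 < e) (hf : 0 < f)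
    (hmin : a ≤ b ∧ a ≤ c ∧ a ≤ d ∧ a ≤ e ∧ a ≤ f) :
    2 * wedge (A - F) (B - A) ≤ wedge (F - E) (B - A) + wedge (A - F) (C - B) ∧
    0 ≤ 1 - 2 * a + c + f - 3 * a * b + a * c + a * e - 3 * a * f + 4 * b * f := by
  obtain ⟨hab, hac, had, hae, haf⟩ := hmin
  have hA : A = M - a • v₁ := by rw [← hAM]; abel
  have hB : B = M - b • v₂ := by rw [← hBM]; abel
  have hN : N = M + v₁ := by rw [hv₁]; abel
  have hP : P = M + v₂ := by rw [hv₂]; abel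
  have hv₃' : v₃ = v₂ - v₁ := by rw [hv₃, hP, hN]; abel
  have hC : C = N - c • v₃ := by rw [← hCN]; abel
  have hE : E = P + e • v₂ := by rw [← hPE]; abel
  have hF : F = P + f • v₃ := by rw [← hPF]; abel
  have h2 : 0 ≤ 1 - 2 * a + c + f - 3 * a * b + a * c + a * e - 3 * a * f + 4 * b * f := by
    nlinarith [mul_nonneg (sub_nonneg.2 hab) (sub_nonneg.2 haf),
      mul_nonneg ha.le (sub_nonneg.2 hab), mul_nonneg ha.le (sub_nonneg.2 haf),
      mul_nonneg ha.le (sub_nonneg.2 hac), mul_nonneg ha.le (sub_nonneg.2 hae)]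
  refine ⟨?_, h2⟩
  have key : wedge (F - E) (B - A) + wedge (A - F) (C - B) - 2 * wedge (A - F) (B - A) =
      1 - 2 * a + c + f - 3 * a * b + a * c + a * e - 3 * a * f + 4 * b * f := by
    subst hv₃' hC hE hF hA hB hN hP
    simp only [wedge, Prod.fst_sub, Prod.snd_sub, Prod.fst_add, Prod.snd_add,
      Prod.smul_fst, Prod.smul_snd, smul_eq_mul] at hnorm ⊢
    linear_combination (1 - 2 * a + c + f - 3 * a * b + a * c + a * e - 3 * a * f
      + 4 * b * f) * hnorm
  linarith [key, h2]
end

section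
/- Let K = A₁A₂…A_n be a positively oriented convex n-gon with n ≥ 6, and let v_i = A_iA_{i+1} (indices mod n) be its side vectors. Then there exists an index i such that v_{i+1} ∧ v_{i+2} ≤ v_i ∧ v_{i+2} + v_{i+1} ∧ v_{i+3}. -/
open scoped BigOperators

section PortOpen

open Fin.NatCast Fin.CommRing

namespace FCS

lemma wedge_add_right (u x y : ℝ × ℝ) : wedge u (x + y) = wedge u x + wedge u y := by
  simp [wedge, Prod.fst_add, Prod.snd_add]; ring

lemma wedge_neg_right (u x : ℝ × ℝ) : wedge u (-x) = - wedge u x := by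
  simp [wedge]; ring

lemma wedge_self (u : ℝ × ℝ) : wedge u u = 0 := by simp [wedge]; ring

lemma wedge_swap (u v : ℝ × ℝ) : wedge u v = - wedge v u := by simp [wedge]; ring

lemma wedge_zero (u : ℝ × ℝ) : wedge u 0 = 0 := by simp [wedge]

lemma plucker (x y z t : ℝ × ℝ) :
    wedge x y * wedge z t - wedge x z * wedge y t + wedge x t * wedge y z = 0 := by
  simp [wedge]; ring

lemma wedge_sum {ι : Type*} (u : ℝ × ℝ) (s : Finset ι) (f : ι → ℝ × ℝ) :
    wedge u (∑ k ∈ s, f k) = ∑ k ∈ s, wedge u (f k) := by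
  classical
  induction s using Finset.induction_on with
  | empty => simp [wedge]
  | insert _ _ h ih => rw [Finset.sum_insert h, Finset.sum_insert h, wedge_add_right, ih]

variable {n : ℕ} [NeZero n]

lemma coe_ne {c d : ℕ} (hc : c < n) (hd : d < n) (h : c ≠ d) :
    (c : Fin n) ≠ (d : Fin n) := by
  intro he
  have h2 : ((c : Fin n)).val = c % n := Fin.val_natCast c n
  rw [he, Fin.val_natCast, Nat.mod_eq_of_lt hc, Nat.mod_eq_of_lt hd] at h2
  exact h h2.symm

lemma add_coe_ne (j : Fin n) {c d : ℕ} (hc : c < n) (hd : d < n)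
    (h : c ≠ d) : j + (c : Fin n) ≠ j + (d : Fin n) :=
  fun he => coe_ne hc hd h (add_left_cancel he)

lemma ne_off (j : Fin n) {k : ℕ} (h1 : k ≠ 0) (h2 : k < n) : j ≠ j + (k : ℕ) := by
  have h0 : 0 < n := by omega
  have := add_coe_ne j (c := 0) (d := k) h0 h2 (Ne.symm h1)
  simpa using this

lemma add_cast_succ (j : Fin n) (k : ℕ) :
    j + ((k : ℕ) : Fin n) + 1 = j + ((k + 1 : ℕ) : Fin n) := by
  push_cast; rw [add_assoc]

/-- side vectors -/
abbrev vv (A : Fin n → ℝ × ℝ) (i : Fin n) : ℝ × ℝ := A (i + 1) - A i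

lemma chord_split (A : Fin n → ℝ × ℝ) (i m : Fin n) :
    A m - A i = (A m - A (i + 1)) + vv A i := by
  simp only [vv]; abel

section WithConvex

variable {A : Fin n → ℝ × ℝ} (hA : IsConvexCCW A) (hn : 6 ≤ n)

include hA hn

/-- consecutive wedges are positive -/
lemma tpos (i : Fin n) : 0 < wedge (vv A i) (vv A (i + 1)) := by
  have h2 : i + 2 ≠ i := by
    have h := ne_off i (k := 2) (by omega) (by omega)
    have e2 : ((2 : ℕ) : Fin n) = (2 : Fin n) := by norm_num
    rw [e2] at h
    exact h.symm
  have h1 : i + 2 ≠ i + 1 := by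
    have h := add_coe_ne i (c := 2) (d := 1) (by omega) (by omega) (by omega)
    have e2 : ((2 : ℕ) : Fin n) = (2 : Fin n) := by norm_num
    have e1 : ((1 : ℕ) : Fin n) = (1 : Fin n) := by norm_num
    rw [e2, e1] at h
    exact h
  have := hA i (i + 2) h2 h1
  have hsplit : A (i + 2) - A i = vv A (i + 1) + vv A i := by
    have : (i + 1) + 1 = i + 2 := by rw [add_assoc]; norm_num
    simp only [vv, this]; abel
  rw [hsplit, wedge_add_right, wedge_self, add_zero] at this
  exact this

/-- single height step -/
lemma step (r : Fin n) (k : ℕ) (hk1 : 1 ≤ k) (hk2 : k + 2 < n)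
    (hneg : wedge (vv A r) (vv A (r + (k : ℕ))) ≤ 0) :
    wedge (vv A r) (vv A (r + ((k+1 : ℕ)))) < 0 := by
  by_contra hcon
  push_neg at hcon
  set e := vv A r with he
  set u := vv A (r + (k : ℕ)) with hu
  set w := vv A (r + ((k+1 : ℕ))) with hw
  set D := A r - A (r + ((k+1 : ℕ))) with hD
  -- instance i1 : edge at r+k, vertex r
  have i1 : 0 < wedge u (A r - A (r + (k : ℕ))) := by
    have c1 : r ≠ r + (k : ℕ) := ne_off r (by omega) (by omega)
    have c2 : r ≠ r + (k : ℕ) + 1 := by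
      rw [add_cast_succ]; exact ne_off r (by omega) (by omega)
    exact hA (r + (k : ℕ)) r c1 c2
  -- i2 : edge at r+(k+1), vertex r
  have i2 : 0 < wedge w D := by
    have c1 : r ≠ r + ((k+1 : ℕ)) := ne_off r (by omega) (by omega)
    have c2 : r ≠ r + ((k+1 : ℕ)) + 1 := by
      rw [add_cast_succ]; exact ne_off r (by omega) (by omega)
    exact hA (r + ((k+1 : ℕ))) r c1 c2
  -- i3 : edge at r, vertex r+(k+1)
  have i3 : 0 < wedge e (A (r + ((k+1 : ℕ))) - A r) := by
    have c1 : r + ((k+1 : ℕ)) ≠ r := (ne_off r (by omega) (by omega)).symm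
    have c2 : r + ((k+1 : ℕ)) ≠ r + 1 := by
      have h := add_coe_ne r (c := k+1) (d := 1) (by omega) (by omega) (by omega)
      have e1 : ((1 : ℕ) : Fin n) = (1 : Fin n) := by norm_num
      rw [e1] at h
      exact h
    exact hA r (r + ((k+1 : ℕ))) c1 c2
  -- i4 : consecutive
  have i4 : 0 < wedge u w := by
    have := tpos hA hn (r + (k : ℕ))
    rwa [add_cast_succ] at this
  -- wedge u D > 0
  have hud : 0 < wedge u D := by
    have hsp : A r - A (r + (k : ℕ)) = D + u := by
      rw [hD, hu]
      have : r + (k:ℕ) + 1 = r + ((k+1:ℕ)) := add_cast_succ r k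
      simp only [vv, this]; abel
    rw [hsp, wedge_add_right, wedge_self, add_zero] at i1
    exact i1
  -- wedge e D < 0
  have hed : wedge e D < 0 := by
    have : D = -(A (r + ((k+1 : ℕ))) - A r) := by rw [hD]; abel
    rw [this, wedge_neg_right]
    linarith
  have hue : 0 ≤ wedge u e := by
    have hs := wedge_swap u e
    have : wedge e u ≤ 0 := hneg
    linarith
  have hp := plucker u e w D
  nlinarith [mul_nonneg hue i2.le, mul_nonneg hud.le hcon, mul_pos i4 (neg_pos.mpr hed)]

/-- last height is negative -/
lemma hlast (r : Fin n) : wedge (vv A r) (vv A (r + ((n-1 : ℕ)))) < 0 := by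
  have key : r + ((n-1 : ℕ)) + 1 = r := by
    rw [add_cast_succ]
    have : ((n - 1 + 1 : ℕ) : Fin n) = 0 := by
      rw [show n - 1 + 1 = n by omega]; simp
    rw [this, add_zero]
  have := tpos hA hn (r + ((n-1 : ℕ)))
  rw [key] at this
  rw [wedge_swap]
  linarith

/-- heights: once nonpositive, always negative -/
lemma height (r : Fin n) (x : ℕ) (hx : 1 ≤ x)
    (hneg : wedge (vv A r) (vv A (r + (x : ℕ))) ≤ 0) :
    ∀ y : ℕ, x < y → y < n → wedge (vv A r) (vv A (r + (y : ℕ))) < 0 := by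
  intro y
  induction y with
  | zero => omega
  | succ y ih =>
    intro hxy hyn
    rcases eq_or_lt_of_le (show y + 1 ≤ n - 1 by omega) with heq | hlt
    · rw [heq]; exact hlast hA hn r
    · -- y + 1 ≤ n - 2, so y + 2 < n... need y+1+1 < n? step needs k+2<n with k=y: y+2<n
      have hy2 : y + 2 < n := by omega
      have hy1 : 1 ≤ y := by omega
      have hprev : wedge (vv A r) (vv A (r + (y : ℕ))) ≤ 0 := by
        rcases eq_or_lt_of_le (show x ≤ y by omega) with hxeq | hxlt
        · rw [← hxeq]; exact hneg
        · exact (ih hxlt (by omega)).le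
      exact step hA hn r y hy1 hy2 hprev

end WithConvex

end FCS

namespace Part2

variable {n : ℕ} [NeZero n]

open FCS

lemma sum_vv (A : Fin n → ℝ × ℝ) : ∑ i : Fin n, vv A i = 0 := by
  have h : ∑ i : Fin n, A (i + 1) = ∑ i : Fin n, A i :=
    Fintype.sum_equiv (Equiv.addRight (1 : Fin n)) _ _ (fun x => rfl)
  simp only [vv]
  rw [Finset.sum_sub_distrib, h, sub_self]

lemma closure (A : Fin n → ℝ × ℝ) (j : Fin n) (e : ℝ × ℝ) :
    ∑ k ∈ Finset.range n, wedge e (vv A (j + (k : ℕ))) = 0 := by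
  have h1 : ∑ k ∈ Finset.range n, vv A (j + (k : ℕ)) = ∑ i : Fin n, vv A (j + i) := by
    rw [← Fin.sum_univ_eq_sum_range (fun k => vv A (j + (k : ℕ))) n]
    apply Finset.sum_congr rfl
    intro i _
    congr 2
    simp [Fin.cast_val_eq_self]
  have h2 : ∑ i : Fin n, vv A (j + i) = ∑ i : Fin n, vv A i :=
    Fintype.sum_equiv (Equiv.addLeft j) _ _ (fun x => rfl)
  rw [← wedge_sum, h1, h2, sum_vv, wedge_zero]

omit [NeZero n] in
lemma sum_split (hn : 6 ≤ n) (f : ℕ → ℝ) :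
    ∑ k ∈ Finset.range n, f k
      = f 0 + f 1 + f 2 + (∑ k ∈ Finset.Ico 3 (n-1), f k) + f (n-1) := by
  have h2 : ∑ k ∈ Finset.range n, f k = (∑ k ∈ Finset.range (n-1), f k) + f (n-1) := by
    conv_lhs => rw [show n = (n-1)+1 by omega]
    rw [Finset.sum_range_succ]
  rw [h2, Finset.range_eq_Ico,
    ← Finset.sum_Ico_consecutive f (show (0:ℕ) ≤ 3 by omega) (show 3 ≤ n-1 by omega)]
  have h3 : ∑ k ∈ Finset.Ico 0 3, f k = f 0 + f 1 + f 2 := by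
    have : Finset.Ico 0 3 = Finset.range 3 := by rw [Finset.range_eq_Ico]
    rw [this]
    rw [Finset.sum_range_succ, Finset.sum_range_succ, Finset.sum_range_one]
  rw [h3]

omit [NeZero n] in
lemma ico_top (hn : 6 ≤ n) (f : ℕ → ℝ) :
    ∑ k ∈ Finset.Ico 3 (n-1), f k = (∑ k ∈ Finset.Ico 3 (n-2), f k) + f (n-2) := by
  rw [show n - 1 = (n-2)+1 by omega, Finset.sum_Ico_succ_top (by omega)]

lemma lit2 (i : Fin n) : i + 2 = i + 1 + 1 := by rw [add_assoc]; norm_num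

lemma lit3 (i : Fin n) : i + 3 = i + 2 + 1 := by rw [add_assoc]; norm_num

lemma lit4 (i : Fin n) : i + 4 = i + 3 + 1 := by rw [add_assoc]; norm_num

end Part2

namespace MainProof

open FCS Part2

lemma alg1 {S1 S2 T B C D : ℝ} (hT : 0 < T) (hS1 : 0 < S1) (hS2 : 0 < S2)
    (hB : T ≤ B) (hC : T ≤ C) (hD : 0 ≤ D) (hkey : S1 * S2 = B * C + D * T) :
    T ≤ S1 + S2 := by
  by_contra hcon
  push_neg at hcon
  have hBC : T * T ≤ B * C := mul_le_mul hB hC hT.le (hT.le.trans hB)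
  nlinarith [sq_nonneg (S1 - S2), mul_nonneg hD hT.le, mul_pos hS1 hS2]

lemma alg2 {S1 S2 T B C D : ℝ} (hT : 0 < T) (hS1 : 0 < S1) (hS2 : 0 < S2)
    (hB : T ≤ B) (hC : T ≤ C) (hD : D < 0) (hkey : S1 * S2 = B * C + D * T)
    (hP3 : T ≤ B + S1 + D) (hP4 : T ≤ C + S2 + D) :
    T ≤ S1 + S2 := by
  by_contra hcon
  push_neg at hcon
  have h4 : 4 * (S1 * S2) ≤ (S1 + S2)^2 := by nlinarith [sq_nonneg (S1 - S2)]
  have h5 : (S1 + S2)^2 < T * T := by nlinarith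
  have h7 : 0 < 2 * B - T := by linarith
  have h8 : 0 < 2 * C - T := by linarith
  have h9 : 0 < B + C - T + 2 * D := by linarith
  nlinarith [mul_pos h7 h8, mul_pos hT h9]

theorem main {n : ℕ} [NeZero n] (hn : 6 ≤ n) (A : Fin n → ℝ × ℝ) (hA : IsConvexCCW A) :
    ∃ i : Fin n,
      wedge (A (i + 2) - A (i + 1)) (A (i + 3) - A (i + 2)) ≤
        wedge (A (i + 1) - A i) (A (i + 3) - A (i + 2)) +
        wedge (A (i + 2) - A (i + 1)) (A (i + 4) - A (i + 3)) := by
  classical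
  obtain ⟨j, -, hj⟩ := Finset.exists_min_image Finset.univ
      (fun i : Fin n => wedge (vv A i) (vv A (i + 1))) ⟨0, Finset.mem_univ 0⟩
  have hmin : ∀ b : Fin n, wedge (vv A j) (vv A (j+1)) ≤ wedge (vv A b) (vv A (b+1)) :=
    fun b => hj b (Finset.mem_univ b)
  -- index arithmetic
  have e1 : j + ((1:ℕ) : Fin n) = j + 1 := by norm_num
  have e2 : j + ((2:ℕ) : Fin n) = j + 2 := by norm_num
  have e12 : (j + 1) + 1 = j + 2 := by rw [add_assoc]; norm_num
  have e3 : j + ((3:ℕ) : Fin n) = (j + 2) + 1 := by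
    have h := add_cast_succ j 2
    rw [show ((2:ℕ):Fin n) = (2:Fin n) by norm_num] at h
    rw [← h]
  have eN1 : j + ((n-1 : ℕ) : Fin n) + 1 = j := by
    rw [add_cast_succ, show n-1+1 = n by omega]
    simp
  have eN2 : j + ((n-2 : ℕ) : Fin n) + 1 = j + ((n-1 : ℕ) : Fin n) := by
    rw [add_cast_succ, show n-2+1 = n-1 by omega]
  have trB : ∀ m : ℕ, (j + 1) + ((m:ℕ) : Fin n) = j + ((m+1 : ℕ) : Fin n) := by
    intro m
    rw [add_assoc]
    congr 1
    push_cast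
    ring
  have trQ : ∀ m : ℕ, (j + 2) + ((m:ℕ) : Fin n) = j + ((m+2 : ℕ) : Fin n) := by
    intro m
    rw [add_assoc]
    congr 1
    push_cast
    ring
  have trP : ∀ m : ℕ, (j + ((n-1:ℕ) : Fin n)) + ((m+1 : ℕ) : Fin n) = j + ((m:ℕ) : Fin n) := by
    intro m
    rw [add_assoc]
    congr 1
    rw [← Nat.cast_add, show (n-1)+(m+1) = n + m by omega, Nat.cast_add,
      Fin.natCast_self, zero_add]
  -- basic quantities
  have ht : 0 < wedge (vv A j) (vv A (j+1)) := tpos hA hn j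
  have hB : wedge (vv A j) (vv A (j+1)) ≤ wedge (vv A (j + ((n-1:ℕ) : Fin n))) (vv A j) := by
    have h := hmin (j + ((n-1:ℕ) : Fin n))
    rwa [eN1] at h
  have hC : wedge (vv A j) (vv A (j+1)) ≤ wedge (vv A (j+1)) (vv A (j+2)) := by
    have h := hmin (j + 1)
    rwa [e12] at h
  have hq3 : wedge (vv A j) (vv A (j+1)) ≤ wedge (vv A (j+2)) (vv A (j + ((3:ℕ) : Fin n))) := by
    have h := hmin (j + 2)
    rwa [← e3] at h
  have hp2 : wedge (vv A j) (vv A (j+1))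
      ≤ wedge (vv A (j + ((n-2:ℕ):Fin n))) (vv A (j + ((n-1:ℕ):Fin n))) := by
    have h := hmin (j + ((n-2:ℕ):Fin n))
    rwa [eN2] at h
  -- positivity of s2 = wedge a q
  have hs2 : 0 < wedge (vv A j) (vv A (j+2)) := by
    by_contra hcon
    push_neg at hcon
    have hx : wedge (vv A j) (vv A (j + ((2:ℕ):Fin n))) ≤ 0 := by rwa [e2]
    have hnegs : ∀ k ∈ Finset.Ico 3 (n-1), wedge (vv A j) (vv A (j + (k:ℕ))) < 0 := by
      intro k hk
      rw [Finset.mem_Ico] at hk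
      exact height hA hn j 2 (by omega) hx k (by omega) (by omega)
    have hcl := closure A j (vv A j)
    rw [sum_split (by omega) (fun k => wedge (vv A j) (vv A (j + (k:ℕ))))] at hcl
    have hf0 : wedge (vv A j) (vv A (j + ((0:ℕ):Fin n))) = 0 := by
      norm_num [wedge_self]
    have hf1 : wedge (vv A j) (vv A (j + ((1:ℕ):Fin n))) = wedge (vv A j) (vv A (j+1)) := by
      rw [e1]
    have hf2 : wedge (vv A j) (vv A (j + ((2:ℕ):Fin n))) = wedge (vv A j) (vv A (j+2)) := by
      rw [e2]
    have hfn : wedge (vv A j) (vv A (j + ((n-1:ℕ):Fin n)))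
        = - wedge (vv A (j + ((n-1:ℕ):Fin n))) (vv A j) := wedge_swap _ _
    have hS : ∑ k ∈ Finset.Ico 3 (n-1), wedge (vv A j) (vv A (j + (k:ℕ))) < 0 :=
      Finset.sum_neg hnegs ⟨3, Finset.mem_Ico.mpr ⟨le_refl 3, by omega⟩⟩
    rw [hf0, hf1, hf2, hfn] at hcl
    linarith
  -- positivity of s1 = wedge p b
  have hs1 : 0 < wedge (vv A (j + ((n-1:ℕ):Fin n))) (vv A (j+1)) := by
    by_contra hcon
    push_neg at hcon
    have hpos : ∀ k ∈ Finset.Ico 3 (n-1), 0 < wedge (vv A (j+1)) (vv A (j + (k:ℕ))) := by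
      intro k hk
      rw [Finset.mem_Ico] at hk
      by_contra hc2
      push_neg at hc2
      have hx : wedge (vv A (j+1)) (vv A ((j+1) + ((k-1 : ℕ):Fin n))) ≤ 0 := by
        rw [trB (k-1), show k-1+1 = k by omega]
        exact hc2
      have hy := height hA hn (j+1) (k-1) (by omega) hx (n-2) (by omega) (by omega)
      rw [trB (n-2), show n-2+1 = n-1 by omega] at hy
      have hsw := wedge_swap (vv A (j+1)) (vv A (j + ((n-1:ℕ):Fin n)))
      linarith
    have hcl := closure A j (vv A (j+1))
    rw [sum_split (by omega) (fun k => wedge (vv A (j+1)) (vv A (j + (k:ℕ))))] at hcl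
    have hf0 : wedge (vv A (j+1)) (vv A (j + ((0:ℕ):Fin n)))
        = - wedge (vv A j) (vv A (j+1)) := by
      have : j + ((0:ℕ):Fin n) = j := by norm_num
      rw [this]
      exact wedge_swap _ _
    have hf1 : wedge (vv A (j+1)) (vv A (j + ((1:ℕ):Fin n))) = 0 := by
      rw [e1]
      exact wedge_self _
    have hf2 : wedge (vv A (j+1)) (vv A (j + ((2:ℕ):Fin n)))
        = wedge (vv A (j+1)) (vv A (j+2)) := by rw [e2]
    have hfn : wedge (vv A (j+1)) (vv A (j + ((n-1:ℕ):Fin n)))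
        = - wedge (vv A (j + ((n-1:ℕ):Fin n))) (vv A (j+1)) := wedge_swap _ _
    have hS : 0 < ∑ k ∈ Finset.Ico 3 (n-1), wedge (vv A (j+1)) (vv A (j + (k:ℕ))) :=
      Finset.sum_pos hpos ⟨3, Finset.mem_Ico.mpr ⟨le_refl 3, by omega⟩⟩
    rw [hf0, hf1, hf2, hfn] at hcl
    linarith
  -- Plucker
  have hkey : wedge (vv A (j + ((n-1:ℕ):Fin n))) (vv A (j+1)) * wedge (vv A j) (vv A (j+2))
      = wedge (vv A (j + ((n-1:ℕ):Fin n))) (vv A j) * wedge (vv A (j+1)) (vv A (j+2))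
        + wedge (vv A (j + ((n-1:ℕ):Fin n))) (vv A (j+2)) * wedge (vv A j) (vv A (j+1)) := by
    have h := plucker (vv A (j + ((n-1:ℕ):Fin n))) (vv A (j+1)) (vv A j) (vv A (j+2))
    have hba : wedge (vv A (j+1)) (vv A j) = - wedge (vv A j) (vv A (j+1)) := wedge_swap _ _
    linear_combination h - wedge (vv A (j + ((n-1:ℕ):Fin n))) (vv A (j+2)) * hba
  -- the main inequality  t ≤ s1 + s2
  have final : wedge (vv A j) (vv A (j+1))
      ≤ wedge (vv A (j + ((n-1:ℕ):Fin n))) (vv A (j+1)) + wedge (vv A j) (vv A (j+2)) := by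
    rcases le_or_gt 0 (wedge (vv A (j + ((n-1:ℕ):Fin n))) (vv A (j+2))) with hd0 | hd0
    · -- case 1 : d ≥ 0
      exact alg1 ht hs1 hs2 hB hC hd0 hkey
    · -- case 2 : d < 0
      have hP3 : wedge (vv A j) (vv A (j+1))
          ≤ wedge (vv A (j + ((n-1:ℕ):Fin n))) (vv A j)
            + wedge (vv A (j + ((n-1:ℕ):Fin n))) (vv A (j+1))
            + wedge (vv A (j + ((n-1:ℕ):Fin n))) (vv A (j+2)) := by
        have hx : wedge (vv A (j + ((n-1:ℕ):Fin n)))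
            (vv A ((j + ((n-1:ℕ):Fin n)) + ((2+1:ℕ):Fin n))) ≤ 0 := by
          rw [trP 2, e2]
          exact hd0.le
        have hnegs : ∀ k ∈ Finset.Ico 3 (n-1),
            wedge (vv A (j + ((n-1:ℕ):Fin n))) (vv A (j + (k:ℕ))) < 0 := by
          intro k hk
          rw [Finset.mem_Ico] at hk
          have hy := height hA hn (j + ((n-1:ℕ):Fin n)) 3 (by omega) hx (k+1)
            (by omega) (by omega)
          rwa [trP k] at hy
        have hcl := closure A j (vv A (j + ((n-1:ℕ):Fin n)))
        rw [sum_split (by omega)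
          (fun k => wedge (vv A (j + ((n-1:ℕ):Fin n))) (vv A (j + (k:ℕ))))] at hcl
        have hf0 : wedge (vv A (j + ((n-1:ℕ):Fin n))) (vv A (j + ((0:ℕ):Fin n)))
            = wedge (vv A (j + ((n-1:ℕ):Fin n))) (vv A j) := by norm_num
        have hf1 : wedge (vv A (j + ((n-1:ℕ):Fin n))) (vv A (j + ((1:ℕ):Fin n)))
            = wedge (vv A (j + ((n-1:ℕ):Fin n))) (vv A (j+1)) := by rw [e1]
        have hf2 : wedge (vv A (j + ((n-1:ℕ):Fin n))) (vv A (j + ((2:ℕ):Fin n)))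
            = wedge (vv A (j + ((n-1:ℕ):Fin n))) (vv A (j+2)) := by rw [e2]
        have hfn : wedge (vv A (j + ((n-1:ℕ):Fin n))) (vv A (j + ((n-1:ℕ):Fin n))) = 0 :=
          wedge_self _
        have hsplit2 : ∑ k ∈ Finset.Ico 3 (n-1),
              wedge (vv A (j + ((n-1:ℕ):Fin n))) (vv A (j + (k:ℕ)))
            = (∑ k ∈ Finset.Ico 3 (n-2),
                wedge (vv A (j + ((n-1:ℕ):Fin n))) (vv A (j + (k:ℕ))))
              + wedge (vv A (j + ((n-1:ℕ):Fin n))) (vv A (j + ((n-2:ℕ):Fin n))) := by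
          exact ico_top (by omega) _
        have hmid : ∑ k ∈ Finset.Ico 3 (n-2),
            wedge (vv A (j + ((n-1:ℕ):Fin n))) (vv A (j + (k:ℕ))) ≤ 0 := by
          apply Finset.sum_nonpos
          intro k hk
          rw [Finset.mem_Ico] at hk
          exact (hnegs k (Finset.mem_Ico.mpr ⟨hk.1, by omega⟩)).le
        have hend : wedge (vv A (j + ((n-1:ℕ):Fin n))) (vv A (j + ((n-2:ℕ):Fin n)))
            ≤ - wedge (vv A j) (vv A (j+1)) := by
          have hsw := wedge_swap (vv A (j + ((n-1:ℕ):Fin n))) (vv A (j + ((n-2:ℕ):Fin n)))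
          linarith
        rw [hf0, hf1, hf2, hfn, hsplit2] at hcl
        linarith
      have hP4 : wedge (vv A j) (vv A (j+1))
          ≤ wedge (vv A (j+1)) (vv A (j+2)) + wedge (vv A j) (vv A (j+2))
            + wedge (vv A (j + ((n-1:ℕ):Fin n))) (vv A (j+2)) := by
        have hpos : ∀ k ∈ Finset.Ico 3 (n-1), 0 < wedge (vv A (j+2)) (vv A (j + (k:ℕ))) := by
          intro k hk
          rw [Finset.mem_Ico] at hk
          by_contra hc2
          push_neg at hc2
          have hx : wedge (vv A (j+2)) (vv A ((j+2) + ((k-2 : ℕ):Fin n))) ≤ 0 := by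
            rw [trQ (k-2), show k-2+2 = k by omega]
            exact hc2
          have hy := height hA hn (j+2) (k-2) (by omega) hx (n-3) (by omega) (by omega)
          rw [trQ (n-3), show n-3+2 = n-1 by omega] at hy
          have hsw := wedge_swap (vv A (j+2)) (vv A (j + ((n-1:ℕ):Fin n)))
          linarith
        have hcl := closure A j (vv A (j+2))
        rw [sum_split (by omega) (fun k => wedge (vv A (j+2)) (vv A (j + (k:ℕ))))] at hcl
        have hf0 : wedge (vv A (j+2)) (vv A (j + ((0:ℕ):Fin n)))
            = - wedge (vv A j) (vv A (j+2)) := by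
          have : j + ((0:ℕ):Fin n) = j := by norm_num
          rw [this]
          exact wedge_swap _ _
        have hf1 : wedge (vv A (j+2)) (vv A (j + ((1:ℕ):Fin n)))
            = - wedge (vv A (j+1)) (vv A (j+2)) := by
          rw [e1]
          exact wedge_swap _ _
        have hf2 : wedge (vv A (j+2)) (vv A (j + ((2:ℕ):Fin n))) = 0 := by
          rw [e2]
          exact wedge_self _
        have hfn : wedge (vv A (j+2)) (vv A (j + ((n-1:ℕ):Fin n)))
            = - wedge (vv A (j + ((n-1:ℕ):Fin n))) (vv A (j+2)) := wedge_swap _ _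
        have hsplit2 : ∑ k ∈ Finset.Ico 3 (n-1), wedge (vv A (j+2)) (vv A (j + (k:ℕ)))
            = wedge (vv A (j+2)) (vv A (j + ((3:ℕ):Fin n)))
              + ∑ k ∈ Finset.Ico 4 (n-1), wedge (vv A (j+2)) (vv A (j + (k:ℕ))) :=
          Finset.sum_eq_sum_Ico_succ_bot (by omega) _
        have hrest : 0 ≤ ∑ k ∈ Finset.Ico 4 (n-1), wedge (vv A (j+2)) (vv A (j + (k:ℕ))) := by
          apply Finset.sum_nonneg
          intro k hk
          rw [Finset.mem_Ico] at hk
          exact (hpos k (Finset.mem_Ico.mpr ⟨by omega, hk.2⟩)).le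
        rw [hf0, hf1, hf2, hfn, hsplit2] at hcl
        linarith
      -- final algebra for case 2
      exact alg2 ht hs1 hs2 hB hC hd0 hkey hP3 hP4
  -- now produce the witness
  refine ⟨j + ((n-1:ℕ):Fin n), ?_⟩
  have k2 : (j + ((n-1:ℕ):Fin n)) + 2 = ((j + ((n-1:ℕ):Fin n)) + 1) + 1 := lit2 _
  have k3 : (j + ((n-1:ℕ):Fin n)) + 3 = ((j + ((n-1:ℕ):Fin n)) + 2) + 1 := lit3 _
  have k4 : (j + ((n-1:ℕ):Fin n)) + 4 = ((j + ((n-1:ℕ):Fin n)) + 3) + 1 := lit4 _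
  have hi1 : (j + ((n-1:ℕ):Fin n)) + 1 = j := eN1
  have hi2 : (j + ((n-1:ℕ):Fin n)) + 2 = j + 1 := by rw [k2, hi1]
  have hi3 : (j + ((n-1:ℕ):Fin n)) + 3 = j + 2 := by rw [k3, hi2, e12]
  have hi4 : (j + ((n-1:ℕ):Fin n)) + 4 = (j + 2) + 1 := by rw [k4, hi3]
  have g1 : vv A j = A ((j + ((n-1:ℕ):Fin n)) + 2) - A ((j + ((n-1:ℕ):Fin n)) + 1) := by
    simp only [vv]
    rw [hi1, hi2]
  have g2 : vv A (j+1) = A ((j + ((n-1:ℕ):Fin n)) + 3) - A ((j + ((n-1:ℕ):Fin n)) + 2) := by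
    simp only [vv]
    rw [hi3, hi2, e12]
  have g3 : vv A (j + ((n-1:ℕ):Fin n))
      = A ((j + ((n-1:ℕ):Fin n)) + 1) - A (j + ((n-1:ℕ):Fin n)) := rfl
  have g4 : vv A (j+2) = A ((j + ((n-1:ℕ):Fin n)) + 4) - A ((j + ((n-1:ℕ):Fin n)) + 3) := by
    simp only [vv]
    rw [hi4, hi3]
  rw [g1, g2, g3, g4] at final
  exact final

end MainProof

end PortOpen

theorem four_consecutive_sides (n : ℕ) [NeZero n] (hn : 6 ≤ n)
    (A : Fin n → ℝ × ℝ) (hA : IsConvexCCW A) :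
    ∃ i : Fin n,
      wedge (A (i + 2) - A (i + 1)) (A (i + 3) - A (i + 2)) ≤
        wedge (A (i + 1) - A i) (A (i + 3) - A (i + 2)) +
        wedge (A (i + 2) - A (i + 1)) (A (i + 4) - A (i + 3)) := by
  exact MainProof.main hn A hA
end

section
/- In the setup of removing vertex A₃ (with side vectors v_i and a_{ij} = v_i ∧ v_j satisfying a₂₃ ≤ a₁₃ + a₂₄), the nonconvex pentagon P = B₁B₂B₃B₄C cut off from K' satisfies Δ(P) = m(1−m)(a₁₃ + a₂₄ − a₂₃) + a₂₃ ≥ a₂₃, where B_i divides A_iA_{i+1} in ratio m:(1−m) and C divides A₂A₄ in ratio m:(1−m). -/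
open scoped BigOperators

theorem cutoff_pentagon_area (m : ℝ) (hm : m ∈ Set.Ioo (0:ℝ) 1)
    (A₁ A₂ A₃ A₄ A₅ v₁ v₂ v₃ v₄ B₁ B₂ B₃ B₄ Cp : ℝ × ℝ)
    (hv₁ : v₁ = A₂ - A₁) (hv₂ : v₂ = A₃ - A₂)
    (hv₃ : v₃ = A₄ - A₃) (hv₄ : v₄ = A₅ - A₄)
    (hpos : 0 < wedge v₁ v₂ ∧ 0 < wedge v₂ v₃ ∧ 0 < wedge v₃ v₄)
    (hineq : wedge v₂ v₃ ≤ wedge v₁ v₃ + wedge v₂ v₄)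
    (hB₁ : B₁ = A₁ + m • v₁) (hB₂ : B₂ = A₂ + m • v₂)
    (hB₃ : B₃ = A₃ + m • v₃) (hB₄ : B₄ = A₄ + m • v₄)
    (hC : Cp = A₂ + m • (A₄ - A₂)) :
    polyArea ![B₁, B₂, B₃, B₄, Cp] =
      m * (1 - m) * (wedge v₁ v₃ + wedge v₂ v₄ - wedge v₂ v₃) + wedge v₂ v₃ ∧
    wedge v₂ v₃ ≤ polyArea ![B₁, B₂, B₃, B₄, Cp] := by

  obtain ⟨hm0, hm1⟩ := hm
  have key : polyArea ![B₁, B₂, B₃, B₄, Cp] =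
      m * (1 - m) * (wedge v₁ v₃ + wedge v₂ v₄ - wedge v₂ v₃) + wedge v₂ v₃ := by
    subst hv₁ hv₂ hv₃ hv₄ hB₁ hB₂ hB₃ hB₄ hC
    simp [polyArea, Fin.sum_univ_five, wedge, Prod.smul_def, Prod.fst_add, Prod.snd_add,
      Prod.fst_sub, Prod.snd_sub, smul_eq_mul]
    ring
  refine ⟨key, ?_⟩
  rw [key]
  nlinarith [mul_pos hm0 (sub_pos.mpr hm1)]
end

section
/- For every m ∈ (0,1) and every convex n-gon K with n ≥ 6, the first m-Kasner descendant K' satisfies 1 − 2m(1−m) < Δ(K')/Δ(K) < 1. -/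
open scoped BigOperators

open Fin.NatCast

private lemma wedge_swap (x y : ℝ × ℝ) : wedge x y = - wedge y x := by
  simp only [wedge]; ring

private lemma triArea_rot (X Y Z : ℝ × ℝ) : triArea X Y Z = triArea Y Z X := by
  simp only [triArea, wedge, Prod.fst_sub, Prod.snd_sub]; ring

private lemma triArea_swap23 (X Y Z : ℝ × ℝ) : triArea X Y Z = - triArea X Z Y := by
  simp only [triArea, wedge, Prod.fst_sub, Prod.snd_sub]; ring

private lemma triArea_self12 (X Y : ℝ × ℝ) : triArea X X Y = 0 := by
  simp only [triArea, wedge, Prod.fst_sub, Prod.snd_sub]; ring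

private lemma triArea_self13 (X Y : ℝ × ℝ) : triArea X Y X = 0 := by
  simp only [triArea, wedge, Prod.fst_sub, Prod.snd_sub]; ring

private lemma triArea_self23 (X Y : ℝ × ℝ) : triArea X Y Y = 0 := by
  simp only [triArea, wedge, Prod.fst_sub, Prod.snd_sub]; ring

private lemma tri_split (P X Y Z : ℝ × ℝ) :
    triArea X Y Z = triArea P X Y + triArea P Y Z - triArea P X Z := by
  simp only [triArea, wedge, Prod.fst_sub, Prod.snd_sub]; ring

private lemma plucker4 (P X Y Z W : ℝ × ℝ) :
    triArea P X Z * triArea P Y W =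
      triArea P X Y * triArea P Z W + triArea P X W * triArea P Y Z := by
  simp only [triArea, wedge, Prod.fst_sub, Prod.snd_sub]; ring

private lemma wedge_expand (P X Y : ℝ × ℝ) :
    wedge X Y = triArea P X Y - wedge P X + wedge P Y := by
  simp only [triArea, wedge, Prod.fst_sub, Prod.snd_sub]; ring

private lemma triArea_wedge3 (X Y Z : ℝ × ℝ) :
    triArea X Y Z = wedge X Y + wedge Y Z + wedge Z X := by
  simp only [triArea, wedge, Prod.fst_sub, Prod.snd_sub]; ring

private lemma key_ineq {a b c d e f : ℝ} (ha : 0 < a) (hb : 0 < b) (hc : 0 < c)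
    (hd : 0 < d) (he : 0 < e) (hf : 0 < f)
    (hp : d * e = a * c + f * b) (h1 : f < a + e) (h2 : f < c + d) : f < d + e := by
  by_contra hcon
  push_neg at hcon
  have h3 : d < a := by linarith
  have h4 : e < c := by linarith
  have h5 : d * e < a * c := by nlinarith
  nlinarith [mul_pos hf hb]

private lemma sum_range_two_mul (g : ℕ → ℝ) :
    ∀ K, ∑ k ∈ Finset.range (2*K), g k = ∑ j ∈ Finset.range K, (g (2*j) + g (2*j+1))
  | 0 => by simp
  | K+1 => by
    rw [show 2*(K+1) = (2*K+1)+1 from by ring, Finset.sum_range_succ,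
      Finset.sum_range_succ, sum_range_two_mul g K, Finset.sum_range_succ]
    ring

section Convex

variable {n : ℕ} [NeZero n]

private lemma edge_pos (A : Fin n → ℝ × ℝ) (hA : IsConvexCCW A) {k j : ℕ}
    (hk : k + 1 < n) (hj : j < n) (h1 : j ≠ k) (h2 : j ≠ k + 1) :
    0 < triArea (A (k : Fin n)) (A ((k + 1 : ℕ) : Fin n)) (A (j : Fin n)) := by
  have hkn : k < n := by omega
  have e1 : ((k + 1 : ℕ) : Fin n) = (k : Fin n) + 1 := by push_cast; ring
  have ne1 : (j : Fin n) ≠ (k : Fin n) := by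
    intro h; apply h1
    have := congrArg Fin.val h
    rwa [Fin.val_cast_of_lt hj, Fin.val_cast_of_lt hkn] at this
  have ne2 : (j : Fin n) ≠ (k : Fin n) + 1 := by
    rw [← e1]; intro h; apply h2
    have := congrArg Fin.val h
    rwa [Fin.val_cast_of_lt hj, Fin.val_cast_of_lt hk] at this
  rw [e1]
  simpa [triArea] using hA (k : Fin n) (j : Fin n) ne1 ne2

private lemma tri_pos (A : Fin n → ℝ × ℝ) (hA : IsConvexCCW A) :
    ∀ a b c : ℕ, a < b → b < c → c < n →
      0 < triArea (A (a : Fin n)) (A (b : Fin n)) (A (c : Fin n)) := by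
  intro a b c hab hbc
  induction c, hbc using Nat.le_induction with
  | base =>
    intro hcn
    rw [triArea_rot]
    exact edge_pos A hA hcn (by omega) (by omega) (by omega)
  | succ c hc ih =>
    intro hcn
    have hcn' : c < n := by omega
    have IH := ih hcn'
    by_cases hb : b = a + 1
    · subst hb
      exact edge_pos A hA (by omega) hcn (by omega) (by omega)
    · have hab1 : a + 1 < b := by omega
      have E := plucker4 (A (a : Fin n)) (A ((a+1 : ℕ) : Fin n)) (A (b : Fin n))
        (A (c : Fin n)) (A ((c+1 : ℕ) : Fin n))
      have h1 : 0 < triArea (A (a:Fin n)) (A ((a+1:ℕ):Fin n)) (A (c:Fin n)) :=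
        edge_pos A hA (by omega) (by omega) (by omega) (by omega)
      have h2 : 0 < triArea (A (a:Fin n)) (A ((a+1:ℕ):Fin n)) (A (b:Fin n)) :=
        edge_pos A hA (by omega) (by omega) (by omega) (by omega)
      have h3 : 0 < triArea (A (a:Fin n)) (A (c:Fin n)) (A ((c+1:ℕ):Fin n)) := by
        rw [triArea_rot]
        exact edge_pos A hA hcn (by omega) (by omega) (by omega)
      have h5 : 0 < triArea (A (a:Fin n)) (A ((a+1:ℕ):Fin n)) (A ((c+1:ℕ):Fin n)) :=
        edge_pos A hA (by omega) hcn (by omega) (by omega)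
      have hprod : 0 < triArea (A (a:Fin n)) (A ((a+1:ℕ):Fin n)) (A (c:Fin n)) *
          triArea (A (a:Fin n)) (A (b:Fin n)) (A ((c+1:ℕ):Fin n)) := by
        rw [E]
        exact add_pos (mul_pos h2 h3) (mul_pos h5 IH)
      rcases mul_pos_iff.mp hprod with ⟨_, h⟩ | ⟨h, _⟩
      · exact h
      · linarith

end Convex

theorem kasner_ngon (n : ℕ) [NeZero n] (hn : 6 ≤ n)
    (m : ℝ) (hm : m ∈ Set.Ioo (0:ℝ) 1)
    (A : Fin n → ℝ × ℝ) (hA : IsConvexCCW A) :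
    1 - 2 * (m * (1 - m)) < polyArea (kasner m A) / polyArea A ∧
    polyArea (kasner m A) / polyArea A < 1 := by
  obtain ⟨hm0, hm1⟩ := hm
  have hmm : 0 < m * (1 - m) := mul_pos hm0 (by linarith)
  -- shift reindexing over the cyclic group Fin n
  have shift : ∀ f : Fin n → ℝ, ∑ i : Fin n, f (i + 1) = ∑ i : Fin n, f i := by
    intro f
    have := Equiv.sum_comp (Equiv.addRight (1 : Fin n)) f
    simpa [Equiv.coe_addRight] using this
  set Sn : ℝ := ∑ i : Fin n, wedge (A i) (A (i + 1)) with hSn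
  set S2 : ℝ := ∑ i : Fin n, wedge (A i) (A (i + 1 + 1)) with hS2
  have hSpoly : polyArea A = Sn := by rw [hSn]; rfl
  -- area of the Kasner descendant
  have hka : polyArea (kasner m A) = (1 - 2*(m*(1-m))) * Sn + (m*(1-m)) * S2 := by
    have hpt : ∀ i : Fin n, wedge (kasner m A i) (kasner m A (i+1)) =
        (1-m)^2 * wedge (A i) (A (i+1)) + (m*(1-m)) * wedge (A i) (A (i+1+1))
          + m^2 * wedge (A (i+1)) (A (i+1+1)) := by
      intro i
      simp only [kasner, wedge, Prod.fst_add, Prod.snd_add, Prod.fst_sub, Prod.snd_sub,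
        Prod.smul_fst, Prod.smul_snd, smul_eq_mul]
      ring
    calc polyArea (kasner m A)
        = ∑ i : Fin n, ((1-m)^2 * wedge (A i) (A (i+1)) + (m*(1-m)) * wedge (A i) (A (i+1+1))
          + m^2 * wedge (A (i+1)) (A (i+1+1))) := Finset.sum_congr rfl (fun i _ => hpt i)
      _ = (1-m)^2 * Sn + (m*(1-m)) * S2
            + m^2 * (∑ i : Fin n, wedge (A (i+1)) (A (i+1+1))) := by
          rw [Finset.sum_add_distrib, Finset.sum_add_distrib, ← Finset.mul_sum,
            ← Finset.mul_sum, ← Finset.mul_sum, hSn, hS2]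
      _ = (1-m)^2 * Sn + (m*(1-m)) * S2 + m^2 * Sn := by
          rw [show (∑ i : Fin n, wedge (A (i+1)) (A (i+1+1))) = Sn from by
            rw [hSn]; exact shift (fun i => wedge (A i) (A (i+1)))]
      _ = (1 - 2*(m*(1-m))) * Sn + (m*(1-m)) * S2 := by ring
  -- fan decompositions
  have hfan : Sn = ∑ i : Fin n, triArea (A 0) (A i) (A (i+1)) := by
    rw [hSn]
    calc ∑ i : Fin n, wedge (A i) (A (i+1))
        = ∑ i : Fin n, (triArea (A 0) (A i) (A (i+1)) - wedge (A 0) (A i)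
            + wedge (A 0) (A (i+1))) :=
          Finset.sum_congr rfl (fun i _ => wedge_expand (A 0) _ _)
      _ = (∑ i : Fin n, triArea (A 0) (A i) (A (i+1))) - (∑ i : Fin n, wedge (A 0) (A i))
            + (∑ i : Fin n, wedge (A 0) (A (i+1))) := by
          rw [Finset.sum_add_distrib, Finset.sum_sub_distrib]
      _ = ∑ i : Fin n, triArea (A 0) (A i) (A (i+1)) := by
          rw [shift (fun i => wedge (A 0) (A i))]; ring
  have hfan2 : S2 = ∑ i : Fin n, triArea (A 0) (A i) (A (i+1+1)) := by
    rw [hS2]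
    calc ∑ i : Fin n, wedge (A i) (A (i+1+1))
        = ∑ i : Fin n, (triArea (A 0) (A i) (A (i+1+1)) - wedge (A 0) (A i)
            + wedge (A 0) (A (i+1+1))) :=
          Finset.sum_congr rfl (fun i _ => wedge_expand (A 0) _ _)
      _ = (∑ i : Fin n, triArea (A 0) (A i) (A (i+1+1))) - (∑ i : Fin n, wedge (A 0) (A i))
            + (∑ i : Fin n, wedge (A 0) (A (i+1+1))) := by
          rw [Finset.sum_add_distrib, Finset.sum_sub_distrib]
      _ = ∑ i : Fin n, triArea (A 0) (A i) (A (i+1+1)) := by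
          have e2 : (∑ i : Fin n, wedge (A 0) (A (i+1+1)))
              = ∑ i : Fin n, wedge (A 0) (A i) := by
            have := shift (fun i => wedge (A 0) (A (i+1)))
            have h2 := shift (fun i => wedge (A 0) (A i))
            simpa using this.trans h2
          rw [e2]; ring
  have hTT : ∑ i : Fin n, triArea (A i) (A (i+1)) (A (i+1+1)) = 2 * Sn - S2 := by
    calc ∑ i : Fin n, triArea (A i) (A (i+1)) (A (i+1+1))
        = ∑ i : Fin n, (wedge (A i) (A (i+1)) + wedge (A (i+1)) (A (i+1+1))
            + wedge (A (i+1+1)) (A i)) :=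
          Finset.sum_congr rfl (fun i _ => triArea_wedge3 _ _ _)
      _ = Sn + (∑ i : Fin n, wedge (A (i+1)) (A (i+1+1)))
            + (∑ i : Fin n, wedge (A (i+1+1)) (A i)) := by
          rw [Finset.sum_add_distrib, Finset.sum_add_distrib, hSn]
      _ = Sn + Sn + (- S2) := by
          rw [show (∑ i : Fin n, wedge (A (i+1)) (A (i+1+1))) = Sn from by
            rw [hSn]; exact shift (fun i => wedge (A i) (A (i+1)))]
          congr 1
          calc ∑ i : Fin n, wedge (A (i+1+1)) (A i)
              = ∑ i : Fin n, - wedge (A i) (A (i+1+1)) :=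
                Finset.sum_congr rfl (fun i _ => wedge_swap _ _)
            _ = - S2 := by rw [Finset.sum_neg_distrib, hS2]
      _ = 2 * Sn - S2 := by ring
  -- move to ℕ indexing
  set v : ℕ → ℝ × ℝ := fun k => A ((k : ℕ) : Fin n) with hv
  have hv0 : v 0 = A 0 := by simp [hv]
  have hvval : ∀ i : Fin n, v i.val = A i := by
    intro i; simp [hv, Fin.cast_val_eq_self]
  have hvval1 : ∀ i : Fin n, v (i.val + 1) = A (i + 1) := by
    intro i; simp [hv, Nat.cast_add, Nat.cast_one, Fin.cast_val_eq_self]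
  have hvval2 : ∀ i : Fin n, v (i.val + 2) = A (i + 1 + 1) := by
    intro i
    have e : ((i.val + 2 : ℕ) : Fin n) = i + 1 + 1 := by
      push_cast [Fin.cast_val_eq_self]; rw [add_assoc, one_add_one_eq_two]
    simp [hv, e]
  have hvn : v n = v 0 := by simp [hv]
  have hvn1 : v (n+1) = v 1 := by
    have e : ((n + 1 : ℕ) : Fin n) = ((1 : ℕ) : Fin n) := by push_cast; simp
    simp [hv, e]
  have tpos : ∀ a b c : ℕ, a < b → b < c → c < n → 0 < triArea (v a) (v b) (v c) := by
    intro a b c h1 h2 h3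
    simpa [hv] using tri_pos A hA a b c h1 h2 h3
  set u : ℕ → ℝ := fun k => triArea (v 0) (v k) (v (k+2)) with hu
  have hSr : Sn = ∑ k ∈ Finset.range n, triArea (v 0) (v k) (v (k+1)) := by
    rw [hfan, ← Fin.sum_univ_eq_sum_range (fun k => triArea (v 0) (v k) (v (k+1)))]
    exact Finset.sum_congr rfl (fun i _ => by rw [hv0, hvval i, hvval1 i])
  have hS2r : S2 = ∑ k ∈ Finset.range n, u k := by
    rw [hfan2, ← Fin.sum_univ_eq_sum_range (fun k => u k)]
    refine Finset.sum_congr rfl (fun i _ => ?_)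
    simp only [hu]
    rw [hv0, hvval i, hvval2 i]
  have hTTr : (∑ i : Fin n, triArea (A i) (A (i+1)) (A (i+1+1)))
      = ∑ k ∈ Finset.range n, triArea (v k) (v (k+1)) (v (k+2)) := by
    rw [← Fin.sum_univ_eq_sum_range (fun k => triArea (v k) (v (k+1)) (v (k+2)))]
    exact Finset.sum_congr rfl (fun i _ => by rw [hvval i, hvval1 i, hvval2 i])
  -- positivity of the polygon area
  have hSpos : 0 < Sn := by
    rw [hSr]
    apply Finset.sum_pos'
    · intro k hk
      have hkn : k < n := Finset.mem_range.mp hk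
      by_cases hk0 : k = 0
      · subst hk0; rw [triArea_self12]
      · by_cases hk1 : k + 1 = n
        · rw [hk1, hvn, triArea_self13]
        · exact (tpos 0 k (k+1) (by omega) (by omega) (by omega)).le
    · exact ⟨1, Finset.mem_range.mpr (by omega),
        tpos 0 1 2 (by omega) (by omega) (by omega)⟩
  -- positivity of the sum of ears, i.e. S2 < 2 Sn
  have hTTpos : 0 < ∑ k ∈ Finset.range n, triArea (v k) (v (k+1)) (v (k+2)) := by
    apply Finset.sum_pos
    · intro k hk
      have hkn : k < n := Finset.mem_range.mp hk
      by_cases h1 : k + 2 < n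
      · exact tpos k (k+1) (k+2) (by omega) (by omega) h1
      · by_cases h2 : k + 2 = n
        · rw [h2, hvn, triArea_rot, triArea_rot]
          exact tpos 0 k (k+1) (by omega) (by omega) (by omega)
        · have hk1 : k + 1 = n := by omega
          have hk2 : k + 2 = n + 1 := by omega
          rw [hk1, hk2, hvn, hvn1, triArea_rot]
          exact tpos 0 1 k (by omega) (by omega) (by omega)
    · exact ⟨0, Finset.mem_range.mpr (by omega)⟩
  have hS2lt : S2 < 2 * Sn := by
    rw [hTTr] at hTT
    linarith
  -- the chain (merging) lemma
  have chain : ∀ K s : ℕ, 1 ≤ s → s + 2*K + 1 ≤ n →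
      triArea (v 0) (v s) (v (s + 2*K)) ≤ ∑ j ∈ Finset.range K, u (s + 2*j) := by
    intro K
    induction K with
    | zero =>
      intro s hs hle
      simp [triArea_self23]
    | succ K ih =>
      intro s hs hle
      have hle' : s + 2*K + 1 ≤ n := by omega
      have IH := ih s hs hle'
      rw [Finset.sum_range_succ]
      have hsplit := tri_split (v 0) (v s) (v (s+2*K)) (v (s+2*K+2))
      have hmid : 0 ≤ triArea (v s) (v (s+2*K)) (v (s+2*K+2)) := by
        rcases Nat.eq_zero_or_pos K with hK0 | hKpos
        · subst hK0; simp [triArea_self12]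
        · exact (tpos s (s+2*K) (s+2*K+2) (by omega) (by omega) (by omega)).le
      have hu' : u (s + 2*K) = triArea (v 0) (v (s+2*K)) (v (s+2*K+2)) := by
        simp only [hu]
      have hidx : s + 2*(K+1) = s + 2*K + 2 := by ring
      rw [hidx]
      linarith
  -- positivity of S2
  have hS2pos : 0 < S2 := by
    rcases Nat.even_or_odd n with he | ho
    · -- even case : n = 2p+4
      obtain ⟨K, hK⟩ := he
      obtain ⟨p, hp⟩ : ∃ p, K = p + 2 := ⟨K - 2, by omega⟩
      have hn4 : n = 2*p + 4 := by omega
      have hp1 : 1 ≤ p := by omega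
      have hu0 : u 0 = 0 := by simp only [hu]; rw [hv0] at *; simp [triArea_self12]
      have hu2p2 : u (2*p+2) = 0 := by
        simp only [hu]
        rw [show 2*p+2+2 = n from by omega, hvn, triArea_self13]
      have hu2p3 : u (2*p+3) = - triArea (v 0) (v 1) (v (2*p+3)) := by
        simp only [hu]
        rw [show 2*p+3+2 = n+1 from by omega, hvn1]
        exact triArea_swap23 _ _ _
      have e1 : ∑ k ∈ Finset.range n, u k
          = ∑ k ∈ Finset.range (2*p+2), u k + u (2*p+2) + u (2*p+3) := by
        rw [show n = (2*p+2)+1+1 from by omega, Finset.sum_range_succ, Finset.sum_range_succ]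
      have e2 : ∑ k ∈ Finset.range (2*p+2), u k
          = ∑ j ∈ Finset.range (p+1), (u (2*j) + u (2*j+1)) := by
        rw [show 2*p+2 = 2*(p+1) from by ring]
        exact sum_range_two_mul u (p+1)
      have e3 : ∑ j ∈ Finset.range (p+1), u (2*j) = ∑ j ∈ Finset.range p, u (2+2*j) := by
        rw [Finset.sum_range_succ' (fun j => u (2*j)) p, hu0]
        simp only [add_zero]
        exact Finset.sum_congr rfl (fun j _ => congrArg u (by ring))
      have c_odd := chain (p+1) 1 (le_refl 1) (by omega)
      rw [show 1 + 2*(p+1) = 2*p+3 from by ring] at c_odd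
      have c_odd' : triArea (v 0) (v 1) (v (2*p+3))
          ≤ ∑ j ∈ Finset.range (p+1), u (2*j+1) := by
        refine c_odd.trans_eq (Finset.sum_congr rfl (fun j _ => congrArg u (by ring)))
      have c_even := chain p 2 (by omega) (by omega)
      rw [show 2 + 2*p = 2*p+2 from by ring] at c_even
      have hT2 : 0 < triArea (v 0) (v 2) (v (2*p+2)) :=
        tpos 0 2 (2*p+2) (by omega) (by omega) (by omega)
      have hsum : ∑ j ∈ Finset.range (p+1), (u (2*j) + u (2*j+1))
          = ∑ j ∈ Finset.range p, u (2+2*j) + ∑ j ∈ Finset.range (p+1), u (2*j+1) := by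
        rw [Finset.sum_add_distrib, e3]
      rw [hS2r, e1, e2, hsum, hu2p2, hu2p3]
      linarith
    · -- odd case : n = 2p+5
      obtain ⟨K, hK⟩ := ho
      obtain ⟨p, hp⟩ : ∃ p, K = p + 2 := ⟨K - 2, by omega⟩
      have hn5 : n = 2*p + 5 := by omega
      have hp1 : 1 ≤ p := by omega
      have hu0 : u 0 = 0 := by simp only [hu]; rw [hv0] at *; simp [triArea_self12]
      have hu2p3 : u (2*p+3) = 0 := by
        simp only [hu]
        rw [show 2*p+3+2 = n from by omega, hvn, triArea_self13]
      have hu2p4 : u (2*p+4) = - triArea (v 0) (v 1) (v (2*p+4)) := by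
        simp only [hu]
        rw [show 2*p+4+2 = n+1 from by omega, hvn1]
        exact triArea_swap23 _ _ _
      have e1 : ∑ k ∈ Finset.range n, u k
          = ∑ k ∈ Finset.range (2*p+2), u k + u (2*p+2) + u (2*p+3) + u (2*p+4) := by
        rw [show n = (2*p+2)+1+1+1 from by omega, Finset.sum_range_succ,
          Finset.sum_range_succ, Finset.sum_range_succ]
      have e2 : ∑ k ∈ Finset.range (2*p+2), u k
          = ∑ j ∈ Finset.range (p+1), (u (2*j) + u (2*j+1)) := by
        rw [show 2*p+2 = 2*(p+1) from by ring]
        exact sum_range_two_mul u (p+1)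
      have e3 : ∑ j ∈ Finset.range (p+1), u (2*j) + u (2*p+2)
          = ∑ j ∈ Finset.range (p+1), u (2+2*j) := by
        rw [Finset.sum_range_succ' (fun j => u (2*j)) p, hu0,
          Finset.sum_range_succ (fun j => u (2+2*j)) p]
        simp only [add_zero]
        rw [show 2+2*p = 2*p+2 from by ring]
        congr 1
        exact Finset.sum_congr rfl (fun j _ => congrArg u (by ring))
      have c_odd := chain (p+1) 1 (le_refl 1) (by omega)
      rw [show 1 + 2*(p+1) = 2*p+3 from by ring] at c_odd
      have c_odd' : triArea (v 0) (v 1) (v (2*p+3))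
          ≤ ∑ j ∈ Finset.range (p+1), u (2*j+1) :=
        c_odd.trans_eq (Finset.sum_congr rfl (fun j _ => congrArg u (by ring)))
      have c_even := chain (p+1) 2 (by omega) (by omega)
      rw [show 2 + 2*(p+1) = 2*p+4 from by ring] at c_even
      -- the key quadratic inequality
      have ha : 0 < triArea (v 0) (v 1) (v 2) := tpos 0 1 2 (by omega) (by omega) (by omega)
      have hb : 0 < triArea (v 0) (v 2) (v (2*p+3)) :=
        tpos 0 2 (2*p+3) (by omega) (by omega) (by omega)
      have hc : 0 < triArea (v 0) (v (2*p+3)) (v (2*p+4)) :=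
        tpos 0 (2*p+3) (2*p+4) (by omega) (by omega) (by omega)
      have hd : 0 < triArea (v 0) (v 1) (v (2*p+3)) :=
        tpos 0 1 (2*p+3) (by omega) (by omega) (by omega)
      have he' : 0 < triArea (v 0) (v 2) (v (2*p+4)) :=
        tpos 0 2 (2*p+4) (by omega) (by omega) (by omega)
      have hf : 0 < triArea (v 0) (v 1) (v (2*p+4)) :=
        tpos 0 1 (2*p+4) (by omega) (by omega) (by omega)
      have hpl := plucker4 (v 0) (v 1) (v 2) (v (2*p+3)) (v (2*p+4))
      have ht1 : 0 < triArea (v 1) (v 2) (v (2*p+4)) :=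
        tpos 1 2 (2*p+4) (by omega) (by omega) (by omega)
      have hs1 := tri_split (v 0) (v 1) (v 2) (v (2*p+4))
      have ht2 : 0 < triArea (v 1) (v (2*p+3)) (v (2*p+4)) :=
        tpos 1 (2*p+3) (2*p+4) (by omega) (by omega) (by omega)
      have hs2 := tri_split (v 0) (v 1) (v (2*p+3)) (v (2*p+4))
      have hkey : triArea (v 0) (v 1) (v (2*p+4))
          < triArea (v 0) (v 1) (v (2*p+3)) + triArea (v 0) (v 2) (v (2*p+4)) := by
        apply key_ineq ha hb hc hd he' hf
        · linarith [hpl]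
        · linarith
        · linarith
      have hsum : ∑ j ∈ Finset.range (p+1), (u (2*j) + u (2*j+1)) + u (2*p+2)
          = ∑ j ∈ Finset.range (p+1), u (2+2*j)
            + ∑ j ∈ Finset.range (p+1), u (2*j+1) := by
        rw [Finset.sum_add_distrib, ← e3]
        ring
      rw [hS2r, e1, hu2p3, hu2p4]
      have : ∑ k ∈ Finset.range (2*p+2), u k + u (2*p+2)
          = ∑ j ∈ Finset.range (p+1), u (2+2*j) + ∑ j ∈ Finset.range (p+1), u (2*j+1) := by
        rw [e2]; exact hsum
      linarith
  -- conclude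
  rw [hSpoly, hka]
  constructor
  · rw [lt_div_iff₀ hSpos]
    nlinarith [mul_pos hmm hS2pos]
  · rw [div_lt_one hSpos]
    nlinarith [mul_pos hmm (by linarith : (0:ℝ) < 2 * Sn - S2)]
end

section
/- For every m ∈ (0,1), every integer n ≥ 6 and every ε > 0, there exists a convex n-gon K whose first m-Kasner descendant K' satisfies Δ(K')/Δ(K) < 1 − 2m(1−m) + ε, and there also exists a convex n-gon K with Δ(K')/Δ(K) > 1 − ε. Hence the bounds 1 − 2m(1−m) and 1 in the general n-gon theorem are best possible. -/
open scoped BigOperators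

/-! ### Auxiliary lemmas -/

lemma val_succ {n : ℕ} [NeZero n] (hn : 2 ≤ n) (i : Fin n) :
    ((i+1 : Fin n) : ℕ) = if (i:ℕ)+1 = n then 0 else (i:ℕ)+1 := by
  rw [Fin.add_def]
  show ((i:ℕ) + (1:Fin n).val) % n = _
  rw [Fin.val_one', Nat.mod_eq_of_lt (show 1 < n by omega)]
  split
  · next h => rw [h, Nat.mod_self]
  · next h => exact Nat.mod_eq_of_lt (by have := i.isLt; omega)

lemma wedge_pts (a b : ℝ) : wedge (a, a^2) (b, b^2) = a*b*(b-a)/2 := by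
  simp only [wedge]; ring

lemma wedge_parabola (a b c : ℝ) :
    wedge ((b,b^2) - (a,a^2)) ((c,c^2) - (a,a^2)) = (b-a)*((c-a)*(c-b))/2 := by
  simp only [wedge, Prod.fst_sub, Prod.snd_sub]
  ring

/-- Points on the parabola `y = x²` with strictly increasing abscissae form a
convex polygon listed counterclockwise. -/
lemma convex_parabola {n : ℕ} [NeZero n] (hn : 2 ≤ n) (t : Fin n → ℝ)
    (hmono : ∀ i j : Fin n, (i:ℕ) < (j:ℕ) → t i < t j) :
    IsConvexCCW (fun i => (t i, (t i)^2)) := by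
  intro i j hji hji1
  have hij : (j:ℕ) ≠ (i:ℕ) := fun h => hji (Fin.ext h)
  have hij1 : (j:ℕ) ≠ ((i+1:Fin n):ℕ) := fun h => hji1 (Fin.ext h)
  have hv := val_succ hn i
  have hi := i.isLt; have hj := j.isLt
  show 0 < wedge ((t (i+1), (t (i+1))^2) - (t i, (t i)^2)) ((t j, (t j)^2) - (t i, (t i)^2))
  rw [wedge_parabola]
  by_cases h : (i:ℕ)+1 = n
  · have h0 : ((i+1:Fin n):ℕ) = 0 := by rw [hv]; simp [h]
    have hb : t (i+1) < t j := hmono _ _ (by omega)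
    have hc : t j < t i := hmono _ _ (by omega)
    have : 0 < (t (i+1) - t i)*((t j - t i)*(t j - t (i+1))) :=
      mul_pos_of_neg_of_neg (by linarith)
        (mul_neg_of_neg_of_pos (by linarith) (by linarith))
    linarith
  · have h1 : ((i+1:Fin n):ℕ) = (i:ℕ)+1 := by rw [hv]; simp [h]
    have hab : t i < t (i+1) := hmono _ _ (by omega)
    rcases lt_or_gt_of_ne hij with hlt | hgt
    · have hc : t j < t i := hmono _ _ hlt
      have : 0 < (t j - t i)*(t j - t (i+1)) := mul_pos_of_neg_of_neg (by linarith) (by linarith)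
      have : 0 < (t (i+1) - t i)*((t j - t i)*(t j - t (i+1))) := mul_pos (by linarith) this
      linarith
    · have hc : t (i+1) < t j := hmono _ _ (by omega)
      have : 0 < (t (i+1) - t i)*((t j - t i)*(t j - t (i+1))) :=
        mul_pos (by linarith) (mul_pos (by linarith) (by linarith))
      linarith

/-- The fundamental identity for the area of the Kasner descendant. -/
lemma kasner_area {n : ℕ} [NeZero n] (m : ℝ) (A : Fin n → ℝ × ℝ) :
    polyArea (kasner m A) = (1 - 2*(m*(1-m))) * polyArea A
      + (m*(1-m)) * ∑ i : Fin n, wedge (A i) (A (i+1+1)) := by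
  have key : ∀ i : Fin n, wedge (kasner m A i) (kasner m A (i+1))
      = (1 - 2*(m*(1-m))) * wedge (A i) (A (i+1))
        + (m*(1-m)) * wedge (A i) (A (i+1+1))
        + (m^2) * (wedge (A (i+1)) (A (i+1+1)) - wedge (A i) (A (i+1))) := by
    intro i
    simp only [kasner, wedge, Prod.fst_add, Prod.snd_add, Prod.fst_sub, Prod.snd_sub,
      Prod.smul_fst, Prod.smul_snd, smul_eq_mul]
    ring
  have tel : ∑ i : Fin n, (wedge (A (i+1)) (A (i+1+1)) - wedge (A i) (A (i+1))) = 0 := by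
    rw [Finset.sum_sub_distrib]
    rw [show ∑ i : Fin n, wedge (A (i+1)) (A (i+1+1))
        = ∑ i : Fin n, wedge (A i) (A (i+1)) from
      Equiv.sum_comp (Equiv.addRight (1 : Fin n)) (fun i => wedge (A i) (A (i+1)))]
    ring
  calc polyArea (kasner m A) = ∑ i : Fin n, ((1 - 2*(m*(1-m))) * wedge (A i) (A (i+1))
        + (m*(1-m)) * wedge (A i) (A (i+1+1))
        + (m^2) * (wedge (A (i+1)) (A (i+1+1)) - wedge (A i) (A (i+1)))) := by
        unfold polyArea; exact Finset.sum_congr rfl fun i _ => key i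
    _ = _ := by
        rw [Finset.sum_add_distrib, Finset.sum_add_distrib, ← Finset.mul_sum, ← Finset.mul_sum,
          ← Finset.mul_sum, tel]
        unfold polyArea; ring

/-- From a limit configuration `u` (a nondecreasing step function) we produce an
honest convex polygon on the parabola whose normalized second shoelace sum is
close to the limit value `L`. -/
lemma exists_good {n : ℕ} [NeZero n] (hn : 6 ≤ n) (u : Fin n → ℝ)
    (hmono : ∀ i j : Fin n, (i:ℕ) < (j:ℕ) → u i ≤ u j)
    (L : ℝ)
    (hS0 : (∑ i : Fin n, wedge (u i, (u i)^2) ((u (i+1)), (u (i+1))^2)) = 1)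
    (hT0 : (∑ i : Fin n, wedge (u i, (u i)^2) ((u (i+1+1)), (u (i+1+1))^2)) = L)
    (ε' : ℝ) (hε' : 0 < ε') :
    ∃ A : Fin n → ℝ × ℝ, IsConvexCCW A ∧ 0 < polyArea A ∧
      |(∑ i : Fin n, wedge (A i) (A (i+1+1))) / polyArea A - L| < ε' := by
  have hcw : ∀ σ : Fin n → Fin n, Continuous (fun δ : ℝ =>
      ∑ i : Fin n, wedge (u i + (i:ℕ)*δ, (u i + (i:ℕ)*δ)^2)
        (u (σ i) + ((σ i :ℕ))*δ, (u (σ i) + ((σ i:ℕ))*δ)^2)) := by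
    intro σ
    apply continuous_finset_sum
    intro i _
    simp only [wedge]
    fun_prop
  have hSc : Continuous (fun δ : ℝ =>
      polyArea (fun i : Fin n => (u i + (i:ℕ)*δ, (u i + (i:ℕ)*δ)^2))) := by
    simpa only [polyArea] using hcw (fun i => i + 1)
  have hTc : Continuous (fun δ : ℝ =>
      ∑ i : Fin n, wedge ((u i + (i:ℕ)*δ, (u i + (i:ℕ)*δ)^2))
        ((u (i+1+1) + ((i+1+1 : Fin n):ℕ)*δ, (u (i+1+1) + ((i+1+1 : Fin n):ℕ)*δ)^2))) :=
    hcw (fun i => i + 1 + 1)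
  set S : ℝ → ℝ := fun δ =>
      polyArea (fun i : Fin n => (u i + (i:ℕ)*δ, (u i + (i:ℕ)*δ)^2)) with hS
  set T : ℝ → ℝ := fun δ =>
      ∑ i : Fin n, wedge ((u i + (i:ℕ)*δ, (u i + (i:ℕ)*δ)^2))
        ((u (i+1+1) + ((i+1+1 : Fin n):ℕ)*δ, (u (i+1+1) + ((i+1+1 : Fin n):ℕ)*δ)^2)) with hT
  have hS0' : S 0 = 1 := by
    simp only [hS, polyArea, mul_zero, add_zero]
    exact hS0
  have hT0' : T 0 = L := by
    simp only [hT, mul_zero, add_zero]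
    exact hT0
  have htends : Filter.Tendsto (fun δ => T δ / S δ) (nhds 0) (nhds L) := by
    have := (hTc.continuousAt (x := 0)).div (hSc.continuousAt (x := 0))
      (by rw [hS0']; norm_num)
    have h := this.tendsto
    rw [Pi.div_apply, hT0', hS0', div_one] at h
    exact h
  have ev1 : ∀ᶠ δ in nhds (0:ℝ), |T δ / S δ - L| < ε' := by
    have := Metric.tendsto_nhds.mp htends ε' hε'
    simpa [Real.dist_eq] using this
  have ev2 : ∀ᶠ δ in nhds (0:ℝ), 0 < S δ := by
    have : Filter.Tendsto S (nhds 0) (nhds 1) := by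
      rw [← hS0']; exact hSc.continuousAt.tendsto
    exact this.eventually (eventually_gt_nhds (by norm_num))
  have ev : ∀ᶠ δ in nhdsWithin (0:ℝ) (Set.Ioi 0),
      (|T δ / S δ - L| < ε' ∧ 0 < S δ) ∧ 0 < δ := by
    refine Filter.Eventually.and ((ev1.and ev2).filter_mono nhdsWithin_le_nhds) ?_
    exact eventually_mem_nhdsWithin.mono (fun x hx => hx)
  obtain ⟨δ, ⟨⟨h1, h2⟩, h3⟩⟩ := ev.exists
  refine ⟨fun i : Fin n => (u i + (i:ℕ)*δ, (u i + (i:ℕ)*δ)^2), ?_, h2, h1⟩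
  exact convex_parabola (by omega) _ (fun i j hij => by
    have h4 : u i ≤ u j := hmono i j hij
    have h5 : ((i:ℕ):ℝ)*δ < ((j:ℕ):ℝ)*δ :=
      mul_lt_mul_of_pos_right (by exact_mod_cast hij) h3
    linarith)

/-! ### Construction 1 : limit configuration `0,…,0,1,2` (ratio near the lower bound) -/

noncomputable def u1 (n : ℕ) : Fin n → ℝ := fun i =>
  if (i:ℕ) ≤ n-3 then 0 else if (i:ℕ) = n-2 then 1 else 2

lemma u1_mono {n : ℕ} [NeZero n] (hn : 6 ≤ n) :
    ∀ i j : Fin n, (i:ℕ) < (j:ℕ) → u1 n i ≤ u1 n j := by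
  intro i j hij
  have hj := j.isLt
  unfold u1
  split_ifs <;> first | (exfalso; omega) | norm_num

lemma u1_S0 {n : ℕ} [NeZero n] (hn : 6 ≤ n) :
    (∑ i : Fin n, wedge (u1 n i, (u1 n i)^2) ((u1 n (i+1)), (u1 n (i+1))^2)) = 1 := by
  rw [Finset.sum_eq_single_of_mem (⟨n-2, by omega⟩ : Fin n) (Finset.mem_univ _)]
  · have hval : ((⟨n-2, by omega⟩ : Fin n) : ℕ) = n-2 := rfl
    have h1 : u1 n ⟨n-2, by omega⟩ = 1 := by
      unfold u1; rw [hval, if_neg (by omega), if_pos rfl]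
    have hv : ((⟨n-2, by omega⟩ + 1 : Fin n) : ℕ) = n-1 := by
      rw [val_succ (by omega), hval, if_neg (by omega)]; omega
    have h2 : u1 n (⟨n-2, by omega⟩ + 1) = 2 := by
      unfold u1; rw [hv, if_neg (by omega), if_neg (by omega)]
    rw [wedge_pts, h1, h2]; norm_num
  · intro j _ hne
    have hjv : (j:ℕ) ≠ n-2 := fun h => hne (Fin.ext (by simpa using h))
    have hj := j.isLt
    rw [wedge_pts]
    rcases Nat.lt_or_ge (j:ℕ) (n-2) with h | h
    · have : u1 n j = 0 := by unfold u1; rw [if_pos (by omega)]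
      rw [this]; ring
    · have hv : ((j + 1 : Fin n) : ℕ) = 0 := by rw [val_succ (by omega), if_pos (by omega)]
      have : u1 n (j+1) = 0 := by unfold u1; rw [hv, if_pos (by omega)]
      rw [this]; ring

lemma u1_T0 {n : ℕ} [NeZero n] (hn : 6 ≤ n) :
    (∑ i : Fin n, wedge (u1 n i, (u1 n i)^2) ((u1 n (i+1+1)), (u1 n (i+1+1))^2)) = 0 := by
  apply Finset.sum_eq_zero
  intro j _
  have hj := j.isLt
  rw [wedge_pts]
  rcases Nat.lt_or_ge (j:ℕ) (n-2) with h | h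
  · have : u1 n j = 0 := by unfold u1; rw [if_pos (by omega)]
    rw [this]; ring
  · have hv1 := val_succ (show 2 ≤ n by omega) j
    have hv2 := val_succ (show 2 ≤ n by omega) (j+1)
    rw [hv1] at hv2
    have hle : ((j+1+1 : Fin n):ℕ) ≤ n-3 := by
      rw [hv2]; split_ifs <;> omega
    have : u1 n (j+1+1) = 0 := by unfold u1; rw [if_pos hle]
    rw [this]; ring

/-! ### Construction 2 : limit configuration `0,0,1,1,2,…,2` (ratio near 1) -/

noncomputable def u2 (n : ℕ) : Fin n → ℝ := fun i =>
  if (i:ℕ) ≤ 1 then 0 else if (i:ℕ) ≤ 3 then 1 else 2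

lemma u2_mono {n : ℕ} [NeZero n] (hn : 6 ≤ n) :
    ∀ i j : Fin n, (i:ℕ) < (j:ℕ) → u2 n i ≤ u2 n j := by
  intro i j hij
  unfold u2
  split_ifs <;> first | (exfalso; omega) | norm_num

lemma u2_S0 {n : ℕ} [NeZero n] (hn : 6 ≤ n) :
    (∑ i : Fin n, wedge (u2 n i, (u2 n i)^2) ((u2 n (i+1)), (u2 n (i+1))^2)) = 1 := by
  rw [Finset.sum_eq_single_of_mem (⟨3, by omega⟩ : Fin n) (Finset.mem_univ _)]
  · have hval : ((⟨3, by omega⟩ : Fin n) : ℕ) = 3 := rfl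
    have h1 : u2 n ⟨3, by omega⟩ = 1 := by
      unfold u2; rw [hval, if_neg (by omega), if_pos (by omega)]
    have hv : ((⟨3, by omega⟩ + 1 : Fin n) : ℕ) = 4 := by
      rw [val_succ (by omega), hval, if_neg (by omega)]
    have h2 : u2 n (⟨3, by omega⟩ + 1) = 2 := by
      unfold u2; rw [hv, if_neg (by omega), if_neg (by omega)]
    rw [wedge_pts, h1, h2]; norm_num
  · intro j _ hne
    have hjv : (j:ℕ) ≠ 3 := fun h => hne (Fin.ext (by simpa using h))
    have hj := j.isLt
    have hv := val_succ (show 2 ≤ n by omega) j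
    rw [wedge_pts]
    rcases Nat.lt_or_ge (j:ℕ) 2 with h | h
    · have : u2 n j = 0 := by unfold u2; rw [if_pos (by omega)]
      rw [this]; ring
    · rcases Nat.lt_or_ge (j:ℕ) 3 with h' | h'
      · -- j = 2 : both values 1
        have e1 : u2 n j = 1 := by unfold u2; rw [if_neg (by omega), if_pos (by omega)]
        have hv' : ((j+1 : Fin n):ℕ) = (j:ℕ)+1 := by rw [hv, if_neg (by omega)]
        have e2 : u2 n (j+1) = 1 := by
          unfold u2; rw [hv', if_neg (by omega), if_pos (by omega)]
        rw [e1, e2]; ring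
      · rcases Nat.lt_or_ge (j:ℕ) (n-1) with h'' | h''
        · -- 4 ≤ j ≤ n-2 : both values 2
          have e1 : u2 n j = 2 := by unfold u2; rw [if_neg (by omega), if_neg (by omega)]
          have hv' : ((j+1 : Fin n):ℕ) = (j:ℕ)+1 := by rw [hv, if_neg (by omega)]
          have e2 : u2 n (j+1) = 2 := by
            unfold u2; rw [hv', if_neg (by omega), if_neg (by omega)]
          rw [e1, e2]; ring
        · -- j = n-1 : second value 0
          have hv' : ((j+1 : Fin n):ℕ) = 0 := by rw [hv, if_pos (by omega)]
          have e2 : u2 n (j+1) = 0 := by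
            unfold u2; rw [hv', if_pos (by omega)]
          rw [e2]; ring

lemma u2_T0 {n : ℕ} [NeZero n] (hn : 6 ≤ n) :
    (∑ i : Fin n, wedge (u2 n i, (u2 n i)^2) ((u2 n (i+1+1)), (u2 n (i+1+1))^2)) = 2 := by
  have h23 : (⟨2, by omega⟩ : Fin n) ≠ ⟨3, by omega⟩ := by
    intro h; have := congrArg Fin.val h; simp at this
  have key : ∀ j : Fin n, j ≠ ⟨2, by omega⟩ → j ≠ ⟨3, by omega⟩ →
      wedge (u2 n j, (u2 n j)^2) ((u2 n (j+1+1)), (u2 n (j+1+1))^2) = 0 := by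
    intro j hne2 hne3
    have hj2 : (j:ℕ) ≠ 2 := fun h => hne2 (Fin.ext (by simpa using h))
    have hj3 : (j:ℕ) ≠ 3 := fun h => hne3 (Fin.ext (by simpa using h))
    have hj := j.isLt
    have hv1 := val_succ (show 2 ≤ n by omega) j
    have hv2 := val_succ (show 2 ≤ n by omega) (j+1)
    rw [hv1] at hv2
    rw [wedge_pts]
    rcases Nat.lt_or_ge (j:ℕ) 2 with h | h
    · have : u2 n j = 0 := by unfold u2; rw [if_pos (by omega)]
      rw [this]; ring
    · rcases Nat.lt_or_ge (j:ℕ) (n-2) with h' | h'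
      · -- 4 ≤ j ≤ n-3 : both values 2
        have hv2' : ((j+1+1 : Fin n):ℕ) = (j:ℕ)+2 := by
          rw [hv2]; split_ifs <;> omega
        have e1 : u2 n j = 2 := by unfold u2; rw [if_neg (by omega), if_neg (by omega)]
        have e2 : u2 n (j+1+1) = 2 := by
          unfold u2; rw [hv2', if_neg (by omega), if_neg (by omega)]
        rw [e1, e2]; ring
      · -- j = n-2 or n-1 : second value is u2 at 0 or 1, namely 0
        have hv2' : ((j+1+1 : Fin n):ℕ) ≤ 1 := by
          rw [hv2]; split_ifs <;> omega
        have e2 : u2 n (j+1+1) = 0 := by unfold u2; rw [if_pos hv2']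
        rw [e2]; ring
  have hsub : ∑ i : Fin n, wedge (u2 n i, (u2 n i)^2) ((u2 n (i+1+1)), (u2 n (i+1+1))^2)
      = ∑ i ∈ ({⟨2, by omega⟩, ⟨3, by omega⟩} : Finset (Fin n)),
          wedge (u2 n i, (u2 n i)^2) ((u2 n (i+1+1)), (u2 n (i+1+1))^2) := by
    refine (Finset.sum_subset (Finset.subset_univ _) ?_).symm
    intro j _ hj
    simp only [Finset.mem_insert, Finset.mem_singleton, not_or] at hj
    exact key j hj.1 hj.2
  rw [hsub, Finset.sum_pair h23]
  have term : ∀ j : Fin n, (j:ℕ) = 2 ∨ (j:ℕ) = 3 →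
      wedge (u2 n j, (u2 n j)^2) ((u2 n (j+1+1)), (u2 n (j+1+1))^2) = 1 := by
    intro j hj23
    have hj := j.isLt
    have hv1 := val_succ (show 2 ≤ n by omega) j
    have hv2 := val_succ (show 2 ≤ n by omega) (j+1)
    rw [hv1] at hv2
    have hv2' : ((j+1+1 : Fin n):ℕ) = (j:ℕ)+2 := by
      rw [hv2]; split_ifs <;> omega
    have e1 : u2 n j = 1 := by
      unfold u2; rw [if_neg (by omega), if_pos (by omega)]
    have e2 : u2 n (j+1+1) = 2 := by
      unfold u2; rw [hv2', if_neg (by omega), if_neg (by omega)]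
    rw [wedge_pts, e1, e2]; norm_num
  rw [term _ (Or.inl rfl), term _ (Or.inr rfl)]
  norm_num

theorem kasner_ngon_sharp (n : ℕ) [NeZero n] (hn : 6 ≤ n)
    (m : ℝ) (hm : m ∈ Set.Ioo (0:ℝ) 1) (ε : ℝ) (hε : 0 < ε) :
    (∃ A : Fin n → ℝ × ℝ, IsConvexCCW A ∧
      polyArea (kasner m A) / polyArea A < 1 - 2 * (m * (1 - m)) + ε) ∧
    (∃ A : Fin n → ℝ × ℝ, IsConvexCCW A ∧
      1 - ε < polyArea (kasner m A) / polyArea A) := by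
  obtain ⟨hm0, hm1⟩ := hm
  have hcpos : 0 < m * (1 - m) := mul_pos hm0 (by linarith)
  have hε' : 0 < ε / (m * (1-m)) := div_pos hε hcpos
  constructor
  · obtain ⟨A, hconv, hSpos, habs⟩ :=
      exists_good hn (u1 n) (u1_mono hn) 0 (u1_S0 hn) (u1_T0 hn) _ hε'
    refine ⟨A, hconv, ?_⟩
    have hSne : polyArea A ≠ 0 := ne_of_gt hSpos
    have hratio : (∑ i : Fin n, wedge (A i) (A (i+1+1))) / polyArea A < ε / (m*(1-m)) := by
      have := (abs_lt.mp habs).2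
      simpa using this
    have expand : polyArea (kasner m A) / polyArea A
        = 1 - 2*(m*(1-m)) + (m*(1-m)) * ((∑ i : Fin n, wedge (A i) (A (i+1+1))) / polyArea A) := by
      rw [kasner_area]
      field_simp
    rw [expand]
    have hlt : (m*(1-m)) * ((∑ i : Fin n, wedge (A i) (A (i+1+1))) / polyArea A)
        < (m*(1-m)) * (ε / (m*(1-m))) := mul_lt_mul_of_pos_left hratio hcpos
    rw [mul_div_cancel₀ _ (ne_of_gt hcpos)] at hlt
    linarith
  · obtain ⟨A, hconv, hSpos, habs⟩ :=
      exists_good hn (u2 n) (u2_mono hn) 2 (u2_S0 hn) (u2_T0 hn) _ hε'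
    refine ⟨A, hconv, ?_⟩
    have hSne : polyArea A ≠ 0 := ne_of_gt hSpos
    have hratio : 2 - ε / (m*(1-m)) < (∑ i : Fin n, wedge (A i) (A (i+1+1))) / polyArea A := by
      have := (abs_lt.mp habs).1
      linarith
    have expand : polyArea (kasner m A) / polyArea A
        = 1 - 2*(m*(1-m)) + (m*(1-m)) * ((∑ i : Fin n, wedge (A i) (A (i+1+1))) / polyArea A) := by
      rw [kasner_area]
      field_simp
    rw [expand]
    have hlt : (m*(1-m)) * (2 - ε / (m*(1-m)))
        < (m*(1-m)) * ((∑ i : Fin n, wedge (A i) (A (i+1+1))) / polyArea A) :=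
      mul_lt_mul_of_pos_left hratio hcpos
    have heq : (m*(1-m)) * (2 - ε / (m*(1-m))) = 2*(m*(1-m)) - ε := by
      field_simp
    linarith
end
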